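/- arXiv:2509.11339 — 4 statements merged into one kernel-verified Lean document; each statement's English description precedes it below -/
import Mathlib

section
/- (Boas) For every complex sequence (s_n)_{n∈ℕ} there exists a finite complex measure μ on ℝ with support contained in [0,∞) such that s_n = ∫ xⁿ dμ(x) for all n ∈ ℕ, and all absolute moments ∫ |x|ⁿ d|μ|(x) are finite. -/
noncomputable section
open MeasureTheory
open scoped ENNReal NNReal
namespace Boas

/- ### Vandermonde weights -/

def nodes (k : ℕ) : Fin (k+1) → ℝ := fun i => (i : ℕ) + 1

lemma nodes_pos (k : ℕ) (i : Fin (k+1)) : 0 < nodes k i := by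
  have : (0:ℝ) ≤ (i:ℕ) := Nat.cast_nonneg _
  simp only [nodes]; linarith

lemma nodes_ge_one (k : ℕ) (i : Fin (k+1)) : 1 ≤ nodes k i := by
  have : (0:ℝ) ≤ (i:ℕ) := Nat.cast_nonneg _
  simp only [nodes]; linarith

lemma nodes_le (k : ℕ) (i : Fin (k+1)) : nodes k i ≤ (k:ℝ)+1 := by
  have h := Nat.le_of_lt_succ i.isLt
  simp only [nodes]
  have : ((i:ℕ):ℝ) ≤ (k:ℝ) := by exact_mod_cast h
  linarith

lemma nodes_inj (k : ℕ) : Function.Injective (nodes k) := by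
  intro i j h
  have : ((i:ℕ):ℝ) = ((j:ℕ):ℝ) := by simpa [nodes] using h
  exact Fin.ext (by exact_mod_cast this)

def Vk (k : ℕ) : Matrix (Fin (k+1)) (Fin (k+1)) ℝ := Matrix.vandermonde (nodes k)

def ee (k : ℕ) : Fin (k+1) → ℝ :=
  Matrix.vecMul (Pi.single (Fin.last k) 1) (Vk k)⁻¹

lemma ee_spec (k : ℕ) (j : Fin (k+1)) :
    (∑ i, ee k i * nodes k i ^ (j:ℕ)) = if j = Fin.last k then 1 else 0 := by
  have hdet : IsUnit (Vk k).det := by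
    rw [isUnit_iff_ne_zero]
    exact Matrix.det_vandermonde_ne_zero_iff.mpr (nodes_inj k)
  have h1 : Matrix.vecMul (ee k) (Vk k) = Pi.single (Fin.last k) 1 := by
    rw [ee, Matrix.vecMul_vecMul, Matrix.nonsing_inv_mul _ hdet, Matrix.vecMul_one]
  have h2 := congrFun h1 j
  rw [Matrix.vecMul, dotProduct] at h2
  simpa [Vk, Matrix.vandermonde, Pi.single_apply] using h2

def EE (k : ℕ) : ℝ := ∑ i, |ee k i|

lemma EE_nonneg (k : ℕ) : 0 ≤ EE k :=
  Finset.sum_nonneg fun i _ => abs_nonneg _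

/- ### The recursion -/

def mom (k : ℕ) (d : ℂ) (l : ℝ) (n : ℕ) : ℂ :=
  ∑ i : Fin (k+1), (d * ((ee k i / l^k : ℝ) : ℂ)) * ((l * nodes k i : ℝ) : ℂ)^n

def lam (k : ℕ) (lp : ℝ) (d : ℂ) : ℝ :=
  max (max ((k:ℝ)+1) (lp * ((k:ℝ)+1) + 1)) (2^k * (1+‖d‖) * (1+EE k))

def step (s : ℕ → ℂ) (prev : ℕ → ℂ × ℝ) (k : ℕ) : ℂ × ℝ :=
  let d := s k - ∑ m ∈ Finset.range k, mom m (prev m).1 (prev m).2 k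
  (d, lam k (if k = 0 then 1 else (prev (k-1)).2) d)

def seq (s : ℕ → ℂ) : ℕ → ℕ → ℂ × ℝ
  | 0 => fun _ => (0, 1)
  | (k+1) => Function.update (seq s k) k (step s (seq s k) k)

def dl (s : ℕ → ℂ) (k : ℕ) : ℂ × ℝ := seq s (k+1) k
def dd (s : ℕ → ℂ) (k : ℕ) : ℂ := (dl s k).1
def ll (s : ℕ → ℂ) (k : ℕ) : ℝ := (dl s k).2

lemma seq_stable (s : ℕ → ℂ) : ∀ n k, k < n → seq s n k = dl s k := by
  intro n
  induction n with
  | zero => intro k h; omega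
  | succ n ih =>
    intro k hk
    rcases Nat.lt_succ_iff_lt_or_eq.mp hk with h | h
    · have hne : k ≠ n := Nat.ne_of_lt h
      simp only [seq, Function.update_apply, if_neg hne]
      exact ih k h
    · subst h
      simp only [dl, seq, Function.update_self]

lemma step_congr (s : ℕ → ℂ) (p q : ℕ → ℂ × ℝ) (k : ℕ) (h : ∀ m < k, p m = q m) :
    step s p k = step s q k := by
  have hsum : (∑ m ∈ Finset.range k, mom m (p m).1 (p m).2 k)
      = ∑ m ∈ Finset.range k, mom m (q m).1 (q m).2 k := by
    refine Finset.sum_congr rfl ?_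
    intro m hm
    rw [h m (Finset.mem_range.mp hm)]
  unfold step
  rcases Nat.eq_zero_or_pos k with rfl | hk
  · simp [hsum]
  · rw [hsum, if_neg (Nat.pos_iff_ne_zero.mp hk), if_neg (Nat.pos_iff_ne_zero.mp hk),
      h (k-1) (by omega)]

lemma dl_eq (s : ℕ → ℂ) (k : ℕ) : dl s k = step s (dl s) k := by
  have : dl s k = step s (seq s k) k := by
    simp only [dl, seq, Function.update_self]
  rw [this]
  exact step_congr s _ _ k (fun m hm => seq_stable s k m hm)

lemma dd_def (s : ℕ → ℂ) (k : ℕ) :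
    dd s k = s k - ∑ m ∈ Finset.range k, mom m (dd s m) (ll s m) k := by
  have := congrArg Prod.fst (dl_eq s k)
  simpa [dd, ll, step] using this

lemma ll_def (s : ℕ → ℂ) (k : ℕ) :
    ll s k = lam k (if k = 0 then 1 else ll s (k-1)) (dd s k) := by
  have h := congrArg Prod.snd (dl_eq s k)
  simp only [step] at h
  rw [ll, h]
  have hd : dd s k = s k - ∑ m ∈ Finset.range k, mom m (dl s m).1 (dl s m).2 k := dd_def s k
  rw [← hd]
  rfl

/- ### Bounds on `ll` -/

lemma ll_ge (s : ℕ → ℂ) (k : ℕ) : (k:ℝ)+1 ≤ ll s k := by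
  rw [ll_def]
  exact le_trans (le_max_left _ _) (le_max_left _ _)

lemma ll_ge_one (s : ℕ → ℂ) (k : ℕ) : 1 ≤ ll s k := by
  have := ll_ge s k
  have : (0:ℝ) ≤ (k:ℝ) := Nat.cast_nonneg _
  linarith [ll_ge s k]

lemma ll_pos (s : ℕ → ℂ) (k : ℕ) : 0 < ll s k := lt_of_lt_of_le one_pos (ll_ge_one s k)

lemma ll_ne_zero (s : ℕ → ℂ) (k : ℕ) : ll s k ≠ 0 := ne_of_gt (ll_pos s k)

lemma ll_big (s : ℕ → ℂ) (k : ℕ) :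
    2^k * (1+‖dd s k‖) * (1+EE k) ≤ ll s k := by
  rw [ll_def]
  exact le_max_right _ _

lemma ll_succ (s : ℕ → ℂ) (k : ℕ) :
    ll s k * ((k:ℝ)+2) + 1 ≤ ll s (k+1) := by
  have h := ll_def s (k+1)
  rw [if_neg (Nat.succ_ne_zero k)] at h
  simp only [Nat.add_sub_cancel] at h
  rw [h]
  refine le_trans ?_ (le_trans (le_max_right _ _) (le_max_left _ _))
  push_cast
  ring_nf
  exact le_rfl

lemma ll_chain (s : ℕ → ℂ) : ∀ m k, m < k → ll s m * ((m:ℝ)+1) < ll s k := by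
  intro m k
  induction k with
  | zero => omega
  | succ k ih =>
    intro hm
    have hs := ll_succ s k
    rcases Nat.lt_succ_iff_lt_or_eq.mp hm with h | h
    · have h1 := ih h
      have h2 : ll s k ≤ ll s k * ((k:ℝ)+2) := by
        nlinarith [ll_pos s k]
      linarith
    · subst h
      nlinarith [ll_pos s m]

/- ### Points and coefficients -/

abbrev Idx : Type := Σ k : ℕ, Fin (k+1)

def pt (s : ℕ → ℂ) (p : Idx) : ℝ := ll s p.1 * nodes p.1 p.2

def cf (s : ℕ → ℂ) (p : Idx) : ℂ :=
  dd s p.1 * ((ee p.1 p.2 / (ll s p.1)^p.1 : ℝ) : ℂ)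

lemma pt_pos (s : ℕ → ℂ) (p : Idx) : 0 < pt s p :=
  mul_pos (ll_pos s p.1) (nodes_pos _ _)

lemma pt_inj (s : ℕ → ℂ) : Function.Injective (pt s) := by
  have key : ∀ (k k' : ℕ) (i : Fin (k+1)) (i' : Fin (k'+1)), k < k' →
      pt s ⟨k, i⟩ < pt s ⟨k', i'⟩ := by
    intro k k' i i' hkk
    have h1 : pt s ⟨k, i⟩ ≤ ll s k * ((k:ℝ)+1) := by
      unfold pt
      exact mul_le_mul_of_nonneg_left (nodes_le k i) (le_of_lt (ll_pos s k))
    have h2 : ll s k' ≤ pt s ⟨k', i'⟩ := by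
      unfold pt
      nlinarith [ll_pos s k', nodes_ge_one k' i']
    have := ll_chain s k k' hkk
    linarith
  intro p q hpq
  obtain ⟨k, i⟩ := p
  obtain ⟨k', i'⟩ := q
  rcases lt_trichotomy k k' with h | h | h
  · exact absurd hpq (ne_of_lt (key k k' i i' h))
  · subst h
    have : nodes k i = nodes k i' := by
      have hl := ll_pos s k
      unfold pt at hpq
      simp only at hpq
      exact mul_left_cancel₀ (ll_ne_zero s k) hpq
    exact congrArg _ (nodes_inj k this)
  · exact absurd hpq.symm (ne_of_lt (key k' k i' i h))

/- ### Level absolute moments -/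

def T (s : ℕ → ℂ) (n k : ℕ) : ℝ :=
  ∑ i : Fin (k+1), ‖cf s ⟨k, i⟩‖ * (pt s ⟨k, i⟩)^n

lemma T_nonneg (s : ℕ → ℂ) (n k : ℕ) : 0 ≤ T s n k := by
  refine Finset.sum_nonneg fun i _ => ?_
  exact mul_nonneg (norm_nonneg _) (pow_nonneg (le_of_lt (pt_pos s _)) _)

lemma T_eq (s : ℕ → ℂ) (n k : ℕ) :
    T s n k = ‖dd s k‖ * ((ll s k)^n / (ll s k)^k) * ∑ i, |ee k i| * nodes k i ^ n := by
  rw [T, Finset.mul_sum]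
  refine Finset.sum_congr rfl fun i _ => ?_
  have hl := ll_pos s k
  have hlk : (0:ℝ) < (ll s k)^k := pow_pos hl k
  have h1 : ‖cf s ⟨k, i⟩‖ = ‖dd s k‖ * (|ee k i| / (ll s k)^k) := by
    rw [cf]
    simp only
    rw [norm_mul, Complex.norm_real, Real.norm_eq_abs, abs_div, abs_of_pos hlk]
  have h2 : (pt s ⟨k, i⟩)^n = (ll s k)^n * nodes k i ^ n := by
    rw [pt]; ring
  rw [h1, h2]
  field_simp

lemma T_bound (s : ℕ → ℂ) (n k : ℕ) (hk : 2*n+1 ≤ k) : T s n k ≤ (1/2)^k := by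
  have hl1 := ll_ge_one s k
  have hl := ll_pos s k
  have hEE := EE_nonneg k
  have hd : (0:ℝ) ≤ ‖dd s k‖ := norm_nonneg _
  -- inner sum bound
  have hsum : (∑ i, |ee k i| * nodes k i ^ n) ≤ EE k * ((k:ℝ)+1)^n := by
    rw [EE, Finset.sum_mul]
    refine Finset.sum_le_sum fun i _ => ?_
    refine mul_le_mul_of_nonneg_left ?_ (abs_nonneg _)
    exact pow_le_pow_left₀ (le_of_lt (nodes_pos k i)) (nodes_le k i) n
  have hkl : ((k:ℝ)+1) ≤ ll s k := ll_ge s k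
  have hk1 : ((k:ℝ)+1)^n ≤ (ll s k)^n :=
    pow_le_pow_left₀ (by positivity) hkl n
  have hpow : (ll s k)^n * (ll s k)^n ≤ (ll s k)^(k-1) := by
    rw [← pow_add]
    exact pow_le_pow_right₀ hl1 (by omega)
  have hlam : 2^k * (1+‖dd s k‖) * (1+EE k) ≤ ll s k := ll_big s k
  have h2k : (0:ℝ) < 2^k := by positivity
  have hlam1 : (0:ℝ) < 2^k * (1+‖dd s k‖) * (1+EE k) := by positivity
  rw [T_eq]
  have step1 : ‖dd s k‖ * ((ll s k)^n / (ll s k)^k) * (∑ i, |ee k i| * nodes k i ^ n)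
      ≤ ‖dd s k‖ * ((ll s k)^n / (ll s k)^k) * (EE k * (ll s k)^n) := by
    refine mul_le_mul_of_nonneg_left ?_ (by positivity)
    exact le_trans hsum (mul_le_mul_of_nonneg_left hk1 hEE)
  refine le_trans step1 ?_
  have hkpow : (ll s k)^(k-1) * ll s k = (ll s k)^k := by
    rw [← pow_succ]
    congr 1
    omega
  have step2 : ‖dd s k‖ * ((ll s k)^n / (ll s k)^k) * (EE k * (ll s k)^n)
      = ‖dd s k‖ * EE k * ((ll s k)^n * (ll s k)^n) / (ll s k)^k := by
    ring
  rw [step2]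
  have hmono : ‖dd s k‖ * EE k * ((ll s k)^n * (ll s k)^n) ≤ ‖dd s k‖ * EE k * (ll s k)^(k-1) :=
    mul_le_mul_of_nonneg_left hpow (by positivity)
  have step3 : ‖dd s k‖ * EE k * ((ll s k)^n * (ll s k)^n) / (ll s k)^k
      ≤ ‖dd s k‖ * EE k * (ll s k)^(k-1) / (ll s k)^k := by
    gcongr
  refine le_trans step3 ?_
  have hk_eq : (ll s k)^k = (ll s k)^(k-1) * ll s k := by
    rw [← pow_succ]; congr 1; omega
  have hne : (ll s k)^(k-1) ≠ 0 := ne_of_gt (pow_pos hl _)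
  have step4 : ‖dd s k‖ * EE k * (ll s k)^(k-1) / (ll s k)^k = ‖dd s k‖ * EE k / ll s k := by
    rw [hk_eq]
    field_simp
  rw [step4, div_le_iff₀ hl]
  have hone : ((1:ℝ)/2)^k * 2^k = 1 := by
    rw [← mul_pow]; norm_num
  calc ‖dd s k‖ * EE k ≤ (1+‖dd s k‖) * (1+EE k) := by nlinarith
    _ = ((1/2)^k * 2^k) * ((1+‖dd s k‖) * (1+EE k)) := by rw [hone]; ring
    _ = (1/2)^k * (2^k * (1+‖dd s k‖) * (1+EE k)) := by ring
    _ ≤ (1/2)^k * ll s k := by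
        refine mul_le_mul_of_nonneg_left hlam (by positivity)

lemma T_summable (s : ℕ → ℂ) (n : ℕ) : Summable (fun k => T s n k) := by
  rw [← summable_nat_add_iff (2*n+1)]
  have hg : Summable (fun k : ℕ => ((1:ℝ)/2)^k) :=
    summable_geometric_of_lt_one (by norm_num) (by norm_num)
  have hle : ∀ k : ℕ, T s n (k+(2*n+1)) ≤ ((1:ℝ)/2)^k := by
    intro k
    refine le_trans (T_bound s n _ (by omega)) ?_
    exact pow_le_pow_of_le_one (by norm_num) (by norm_num) (by omega)
  exact Summable.of_nonneg_of_le (fun k => T_nonneg s n _) hle hg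

lemma S_summable (s : ℕ → ℂ) (n : ℕ) :
    Summable (fun p : Idx => ‖cf s p‖ * pt s p ^ n) := by
  refine (summable_sigma_of_nonneg ?_).mpr ⟨?_, ?_⟩
  · intro p
    exact mul_nonneg (norm_nonneg _) (pow_nonneg (le_of_lt (pt_pos s p)) n)
  · intro k
    exact Summable.of_finite
  · have he : (fun k => ∑' i : Fin (k+1), ‖cf s ⟨k, i⟩‖ * pt s ⟨k, i⟩ ^ n)
        = fun k => T s n k := by
      funext k
      rw [tsum_fintype]
      rfl
    rw [he]
    exact T_summable s n

/- ### The measure -/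

def rho (s : ℕ → ℂ) : Measure ℝ :=
  Measure.sum (fun p : Idx => (‖cf s p‖₊ : ℝ≥0∞) • Measure.dirac (pt s p))

lemma lint_rho (s : ℕ → ℂ) (f : ℝ → ℝ≥0∞) :
    ∫⁻ x, f x ∂(rho s) = ∑' p : Idx, (‖cf s p‖₊ : ℝ≥0∞) * f (pt s p) := by
  rw [rho, lintegral_sum_measure]
  congr 1
  funext p
  rw [lintegral_smul_measure, lintegral_dirac, smul_eq_mul]

lemma cf_nnnorm_summable (s : ℕ → ℂ) : Summable (fun p : Idx => ‖cf s p‖₊) := by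
  rw [← NNReal.summable_coe]
  have := S_summable s 0
  simpa using this

instance rho_finite (s : ℕ → ℂ) : IsFiniteMeasure (rho s) := by
  constructor
  have h : rho s Set.univ = ∑' p : Idx, (‖cf s p‖₊ : ℝ≥0∞) := by
    rw [rho, Measure.sum_apply _ MeasurableSet.univ]
    congr 1
    funext p
    simp [Measure.smul_apply, Measure.dirac_apply]
  rw [h]
  exact lt_top_iff_ne_top.mpr (ENNReal.tsum_coe_ne_top_iff_summable.mpr (cf_nnnorm_summable s))

lemma rho_neg (s : ℕ → ℂ) : rho s (Set.Iio 0) = 0 := by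
  rw [rho, Measure.sum_apply _ measurableSet_Iio]
  refine ENNReal.tsum_eq_zero.mpr fun p => ?_
  have hp : pt s p ∉ Set.Iio (0:ℝ) := by
    simp only [Set.mem_Iio, not_lt]
    exact le_of_lt (pt_pos s p)
  rw [Measure.smul_apply, Measure.dirac_apply]
  simp [Set.indicator_of_notMem hp]

/- ### The density -/

def gfun (s : ℕ → ℂ) (p : Idx) : ℂ := (‖cf s p‖)⁻¹ • cf s p

def hfun (s : ℕ → ℂ) : ℝ → ℂ := Function.extend (pt s) (gfun s) 0

lemma hfun_at (s : ℕ → ℂ) (p : Idx) : hfun s (pt s p) = gfun s p :=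
  (pt_inj s).extend_apply _ _ _

lemma hfun_off (s : ℕ → ℂ) {x : ℝ} (hx : x ∉ Set.range (pt s)) : hfun s x = 0 := by
  rw [hfun, Function.extend_apply' _ _ _ (by simpa [Set.mem_range] using hx)]
  rfl

lemma norm_gfun_le (s : ℕ → ℂ) (p : Idx) : ‖gfun s p‖ ≤ 1 := by
  rw [gfun, norm_smul]
  rcases eq_or_ne (cf s p) 0 with h | h
  · simp [h]
  · have hpos : 0 < ‖cf s p‖ := norm_pos_iff.mpr h
    rw [norm_inv, Real.norm_eq_abs, abs_of_pos hpos, inv_mul_cancel₀ (ne_of_gt hpos)]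

lemma norm_hfun_le (s : ℕ → ℂ) (x : ℝ) : ‖hfun s x‖ ≤ 1 := by
  by_cases hx : x ∈ Set.range (pt s)
  · obtain ⟨p, rfl⟩ := hx
    rw [hfun_at]
    exact norm_gfun_le s p
  · rw [hfun_off s hx]
    simp

lemma smul_gfun (s : ℕ → ℂ) (p : Idx) : ‖cf s p‖ • gfun s p = cf s p := by
  rw [gfun, smul_smul]
  rcases eq_or_ne (cf s p) 0 with h | h
  · simp [h]
  · rw [mul_inv_cancel₀ (norm_ne_zero_iff.mpr h), one_smul]

lemma measurable_hfun (s : ℕ → ℂ) : Measurable (hfun s) := by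
  intro S _
  have hr : (Set.range (pt s)).Countable := Set.countable_range _
  have hsplit : hfun s ⁻¹' S =
      ((hfun s ⁻¹' S) ∩ Set.range (pt s)) ∪ ((hfun s ⁻¹' S) \ Set.range (pt s)) :=
    (Set.inter_union_diff _ _).symm
  rw [hsplit]
  refine MeasurableSet.union ((hr.mono Set.inter_subset_right).measurableSet) ?_
  by_cases h0 : (0:ℂ) ∈ S
  · have : (hfun s ⁻¹' S) \ Set.range (pt s) = (Set.range (pt s))ᶜ := by
      ext x
      simp only [Set.mem_diff, Set.mem_preimage, Set.mem_compl_iff]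
      constructor
      · exact fun h => h.2
      · exact fun h => ⟨by rw [hfun_off s h]; exact h0, h⟩
    rw [this]
    exact hr.measurableSet.compl
  · have : (hfun s ⁻¹' S) \ Set.range (pt s) = ∅ := by
      ext x
      simp only [Set.mem_diff, Set.mem_preimage, Set.mem_empty_iff_false, iff_false, not_and]
      intro hxS hx
      rw [hfun_off s hx] at hxS
      exact h0 hxS
    rw [this]
    exact MeasurableSet.empty

/- ### Integrability -/

lemma integrable_rho {E : Type*} [NormedAddCommGroup E] (s : ℕ → ℂ) (n : ℕ) (f : ℝ → E)
    (hm : AEStronglyMeasurable f (rho s)) (hb : ∀ p : Idx, ‖f (pt s p)‖ ≤ pt s p ^ n) :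
    Integrable f (rho s) := by
  refine ⟨hm, ?_⟩
  rw [hasFiniteIntegral_def, lint_rho]
  calc ∑' p : Idx, (‖cf s p‖₊ : ℝ≥0∞) * (‖f (pt s p)‖₊ : ℝ≥0∞)
      ≤ ∑' p : Idx, ENNReal.ofReal (‖cf s p‖ * pt s p ^ n) := by
        refine ENNReal.tsum_le_tsum fun p => ?_
        rw [ENNReal.ofReal_mul (norm_nonneg _), ← ENNReal.ofReal_coe_nnreal,
          ← ENNReal.ofReal_coe_nnreal, coe_nnnorm, coe_nnnorm]
        exact mul_le_mul' le_rfl (ENNReal.ofReal_le_ofReal (hb p))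
    _ = ENNReal.ofReal (∑' p : Idx, ‖cf s p‖ * pt s p ^ n) :=
        (ENNReal.ofReal_tsum_of_nonneg
          (fun p => mul_nonneg (norm_nonneg _) (pow_nonneg (le_of_lt (pt_pos s p)) n))
          (S_summable s n)).symm
    _ < ⊤ := ENNReal.ofReal_lt_top

lemma integral_rho (s : ℕ → ℂ) (f : ℝ → ℂ) (hf : Integrable f (rho s)) :
    ∫ x, f x ∂(rho s) = ∑' p : Idx, ‖cf s p‖ • f (pt s p) := by
  rw [rho] at hf ⊢
  rw [integral_sum_measure hf]
  congr 1
  funext p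
  rw [integral_smul_measure, integral_dirac]
  congr 1

/- ### Moment identities -/

lemma mom_factor (k : ℕ) (d : ℂ) (l : ℝ) (n : ℕ) :
    mom k d l n = d * ((l^n / l^k : ℝ) : ℂ) * ((∑ i, ee k i * nodes k i ^ n : ℝ) : ℂ) := by
  rw [mom]
  push_cast
  rw [Finset.mul_sum]
  refine Finset.sum_congr rfl fun i _ => ?_
  ring

lemma mom_zero (k : ℕ) (d : ℂ) (l : ℝ) (n : ℕ) (hn : n < k) : mom k d l n = 0 := by
  rw [mom_factor]
  have h := ee_spec k ⟨n, by omega⟩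
  have hne : (⟨n, by omega⟩ : Fin (k+1)) ≠ Fin.last k := by
    intro hc
    have : n = k := by
      have := congrArg Fin.val hc
      simpa [Fin.val_last] using this
    omega
  rw [if_neg hne] at h
  simp only [h]
  simp

lemma mom_self (k : ℕ) (d : ℂ) (l : ℝ) (hl : l ≠ 0) : mom k d l k = d := by
  rw [mom_factor]
  have h := ee_spec k (Fin.last k)
  rw [if_pos rfl] at h
  have hval : ((Fin.last k : Fin (k+1)) : ℕ) = k := Fin.val_last k
  rw [hval] at h
  rw [h, div_self (pow_ne_zero k hl)]
  simp

lemma tsum_mom (s : ℕ → ℂ) (n : ℕ) :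
    ∑' k : ℕ, mom k (dd s k) (ll s k) n = s n := by
  have hz : ∀ k ∉ Finset.range (n+1), mom k (dd s k) (ll s k) n = 0 := by
    intro k hk
    exact mom_zero k _ _ n (by simpa using Finset.mem_range.not.mp hk)
  rw [tsum_eq_sum hz, Finset.sum_range_succ, mom_self _ _ _ (ll_ne_zero s n)]
  have hd := dd_def s n
  rw [hd]
  ring

end Boas

open Boas in
/-- (Boas) Every complex sequence is the moment sequence of a finite complex
measure (given as a complex density `h` w.r.t. a finite positive measure `ρ`)
supported in `[0,∞)`, with all absolute moments finite. -/
theorem stmt7 (s : ℕ → ℂ) :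
    ∃ (ρ : Measure ℝ) (h : ℝ → ℂ), IsFiniteMeasure ρ ∧ Measurable h ∧
      ρ (Set.Iio 0) = 0 ∧
      (∀ n : ℕ, Integrable (fun x => |x| ^ n * ‖h x‖) ρ) ∧
      (∀ n : ℕ, s n = ∫ x, (x : ℂ) ^ n * h x ∂ρ) := by
  refine ⟨rho s, hfun s, inferInstance, measurable_hfun s, rho_neg s, ?_, ?_⟩
  · intro n
    refine integrable_rho s n _ ?_ ?_
    · exact (((_root_.continuous_abs.measurable).pow_const n).mul
        ((measurable_hfun s).norm)).aestronglyMeasurable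
    · intro p
      have hpp := pt_pos s p
      calc ‖|pt s p| ^ n * ‖hfun s (pt s p)‖‖
          = |pt s p| ^ n * ‖hfun s (pt s p)‖ := by
            rw [Real.norm_eq_abs, abs_of_nonneg (by positivity)]
        _ ≤ |pt s p| ^ n * 1 :=
            mul_le_mul_of_nonneg_left (norm_hfun_le s _) (by positivity)
        _ = pt s p ^ n := by rw [mul_one, abs_of_pos hpp]
  · intro n
    have hb : ∀ p : Idx, ‖(pt s p : ℂ) ^ n * hfun s (pt s p)‖ ≤ pt s p ^ n := by
      intro p
      have hpp := pt_pos s p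
      calc ‖(pt s p : ℂ) ^ n * hfun s (pt s p)‖
          = |pt s p| ^ n * ‖hfun s (pt s p)‖ := by
            rw [norm_mul, norm_pow, Complex.norm_real, Real.norm_eq_abs]
        _ ≤ |pt s p| ^ n * 1 :=
            mul_le_mul_of_nonneg_left (norm_hfun_le s _) (by positivity)
        _ = pt s p ^ n := by rw [mul_one, abs_of_pos hpp]
    have hint : Integrable (fun x : ℝ => (x : ℂ) ^ n * hfun s x) (rho s) := by
      refine integrable_rho s n _ ?_ hb
      exact ((Complex.measurable_ofReal.pow_const n).mul (measurable_hfun s)).aestronglyMeasurable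
    rw [integral_rho s _ hint]
    have hterm : ∀ p : Idx,
        ‖cf s p‖ • ((pt s p : ℂ) ^ n * hfun s (pt s p)) = (pt s p : ℂ) ^ n * cf s p := by
      intro p
      rw [hfun_at, ← mul_smul_comm, smul_gfun]
    rw [tsum_congr hterm]
    have hsum : Summable (fun p : Idx => (pt s p : ℂ) ^ n * cf s p) := by
      apply Summable.of_norm
      have he : (fun p : Idx => ‖(pt s p : ℂ) ^ n * cf s p‖)
          = fun p : Idx => ‖cf s p‖ * pt s p ^ n := by
        funext p
        rw [norm_mul, norm_pow, Complex.norm_real, Real.norm_eq_abs,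
          abs_of_pos (pt_pos s p), mul_comm]
      rw [he]
      exact S_summable s n
    rw [hsum.tsum_sigma]
    have hinner : ∀ k : ℕ, (∑' i : Fin (k+1), (pt s ⟨k, i⟩ : ℂ) ^ n * cf s ⟨k, i⟩)
        = mom k (dd s k) (ll s k) n := by
      intro k
      rw [tsum_fintype, mom]
      refine Finset.sum_congr rfl fun i _ => ?_
      rw [mul_comm]
      rfl
    rw [tsum_congr hinner, tsum_mom]
end
end

section
/- (Boas, atomic version) For every complex sequence (s_n)_{n∈ℕ} there exist complex coefficients (c_k)_{k∈ℕ} with Σ_k |c_k| · kⁿ < ∞ for all n, such that s_n = Σ_{k=0}^{∞} c_k · kⁿ for all n ∈ ℕ (with the convention 0⁰ = 1). -/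
open Finset
noncomputable section

def V (m j : ℕ) : ℂ := ∑ i ∈ range (m+1), (-1)^i * (m.choose i) * ((i:ℂ)+1)^j

lemma V_succ (m j : ℕ) :
    V (m+1) j = V m j - ∑ t ∈ range (j+1), (j.choose t : ℂ) * V m t := by
  have h1 : V (m+1) j
      = ∑ i ∈ range (m+1), (-1)^(i+1) * ((m+1).choose (i+1) : ℂ) * ((i:ℂ)+2)^j + 1 := by
    rw [V, Finset.sum_range_succ' (fun i => (-1)^i * ((m+1).choose i : ℂ) * ((i:ℂ)+1)^j)]
    norm_num
    apply Finset.sum_congr rfl; intro i _; push_cast; ring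
  -- split via Pascal
  have h2 : ∀ i, ((m+1).choose (i+1) : ℂ) = (m.choose i : ℂ) + (m.choose (i+1) : ℂ) := by
    intro i; rw [Nat.choose_succ_succ]; push_cast; ring
  have h3 : V (m+1) j
      = (∑ i ∈ range (m+1), (-1)^(i+1) * (m.choose i : ℂ) * ((i:ℂ)+2)^j)
      + ((∑ i ∈ range (m+1), (-1)^(i+1) * (m.choose (i+1) : ℂ) * ((i:ℂ)+2)^j) + 1) := by
    rw [h1, ← add_assoc, ← Finset.sum_add_distrib]
    congr 1
    apply Finset.sum_congr rfl; intro i _; rw [h2]; ring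
  -- second sum equals V m j - 1
  have h4 : (∑ i ∈ range (m+1), (-1)^(i+1) * (m.choose (i+1) : ℂ) * ((i:ℂ)+2)^j) = V m j - 1 := by
    have := Finset.sum_range_succ' (fun i => (-1)^i * (m.choose i : ℂ) * ((i:ℂ)+1)^j) (m+1)
    have hV2 : ∑ i ∈ range (m+1+1), (-1)^i * (m.choose i : ℂ) * ((i:ℂ)+1)^j = V m j := by
      rw [Finset.sum_range_succ]
      simp [V, Nat.choose_succ_self]
    rw [hV2] at this
    simp only [pow_zero, Nat.choose_zero_right, Nat.cast_one, Nat.cast_zero] at this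
    have h6 : ∑ i ∈ range (m+1), (-1)^(i+1) * (m.choose (i+1) : ℂ) * ((i:ℂ)+1+1)^j = V m j - 1 := by
      rw [this, show ((1:ℂ) * 1 * ((0:ℂ)+1)^j) = 1 by norm_num, add_sub_cancel_right]
      apply Finset.sum_congr rfl; intro k _; push_cast; ring
    rw [← h6]
    apply Finset.sum_congr rfl; intro i _; ring_nf
  -- first sum: expand (i+2)^j
  have h5 : (∑ i ∈ range (m+1), (-1)^(i+1) * (m.choose i : ℂ) * ((i:ℂ)+2)^j)
      = - ∑ t ∈ range (j+1), (j.choose t : ℂ) * V m t := by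
    have hexp : ∀ i : ℕ, ((i:ℂ)+2)^j = ∑ t ∈ range (j+1), ((i:ℂ)+1)^t * (j.choose t : ℂ) := by
      intro i
      have := add_pow ((i:ℂ)+1) 1 j
      norm_num at this
      rw [show ((i:ℂ)+2) = (i:ℂ)+1+1 by ring, this]
    calc (∑ i ∈ range (m+1), (-1)^(i+1) * (m.choose i : ℂ) * ((i:ℂ)+2)^j)
        = ∑ i ∈ range (m+1), ∑ t ∈ range (j+1),
            (j.choose t : ℂ) * (-(-1)^i * (m.choose i : ℂ) * ((i:ℂ)+1)^t) := by
          apply Finset.sum_congr rfl; intro i _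
          rw [hexp, Finset.mul_sum]
          apply Finset.sum_congr rfl; intro t _; ring
      _ = ∑ t ∈ range (j+1), ∑ i ∈ range (m+1),
            (j.choose t : ℂ) * (-(-1)^i * (m.choose i : ℂ) * ((i:ℂ)+1)^t) := Finset.sum_comm
      _ = - ∑ t ∈ range (j+1), (j.choose t : ℂ) * V m t := by
          rw [← Finset.sum_neg_distrib]
          apply Finset.sum_congr rfl; intro t _
          rw [V, Finset.mul_sum, ← Finset.sum_neg_distrib]
          apply Finset.sum_congr rfl; intro i _; ring
  rw [h3, h4, h5]; ring


lemma V_val : ∀ m : ℕ, ∀ j ≤ m, V m j = if j = m then (-1)^m * (m.factorial : ℂ) else 0 := by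
  intro m
  induction m with
  | zero =>
    intro j hj
    interval_cases j
    simp [V]
  | succ m ih =>
    intro j hj
    rw [V_succ]
    rcases Nat.lt_or_ge j (m+1) with hlt | hge
    · -- j ≤ m
      have hj' : j ≤ m := Nat.lt_succ_iff.mp hlt
      rw [if_neg (by omega)]
      have hsum : ∑ t ∈ range (j+1), (j.choose t : ℂ) * V m t
          = if j = m then (-1)^m * (m.factorial : ℂ) else 0 := by
        rcases eq_or_ne j m with rfl | hne
        · rw [Finset.sum_eq_single j]
          · rw [ih j le_rfl, if_pos rfl]; simp
          · intro t ht htne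
            rw [ih t (by simp at ht; omega), if_neg (by omega), mul_zero]
          · intro h; simp at h
        · rw [if_neg hne]
          apply Finset.sum_eq_zero
          intro t ht
          rw [ih t (by simp at ht; omega), if_neg (by simp at ht; omega), mul_zero]
      rw [hsum, ih j hj', sub_self]
    · -- j = m+1
      have hj1 : j = m + 1 := le_antisymm hj hge
      subst hj1
      rw [if_pos rfl]
      -- V m (m+1) appears in the sum at t = m+1 and cancels
      rw [Finset.sum_range_succ]
      have hrest : ∑ t ∈ range (m+1), ((m+1).choose t : ℂ) * V m t
          = ((m+1) : ℂ) * ((-1)^m * (m.factorial : ℂ)) := by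
        rw [Finset.sum_eq_single m]
        · rw [ih m le_rfl, if_pos rfl]; simp
        · intro t ht htne
          rw [ih t (by simp at ht; omega), if_neg htne, mul_zero]
        · intro h; simp at h
      rw [hrest]
      simp [Nat.factorial_succ]
      push_cast
      ring

/-- weight of atom i in stage m with target t and spacing h -/
def w (t : ℂ) (m h i : ℕ) : ℂ :=
  t * (-1)^(m+i) * (m.choose i) / ((h:ℂ)^m * (m.factorial : ℂ))

lemma mom_eq (t : ℂ) (m h : ℕ) (hh : 0 < h) (j : ℕ) (hj : j ≤ m) :
    ∑ i ∈ range (m+1), w t m h i * (((i+1)*h : ℕ) : ℂ)^j = if j = m then t else 0 := by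
  have hcast : ∀ i : ℕ, (((i+1)*h : ℕ) : ℂ)^j = ((i:ℂ)+1)^j * (h:ℂ)^j := by
    intro i; rw [Nat.cast_mul, mul_pow]; push_cast; ring
  have key : ∑ i ∈ range (m+1), w t m h i * (((i+1)*h : ℕ) : ℂ)^j
      = (t * (-1)^m * (h:ℂ)^j / ((h:ℂ)^m * (m.factorial : ℂ))) * V m j := by
    rw [V, Finset.mul_sum]
    apply Finset.sum_congr rfl
    intro i _
    rw [hcast, w, pow_add]
    ring
  rw [key, V_val m j hj]
  have hhne : (h:ℂ)^m ≠ 0 := pow_ne_zero _ (by exact_mod_cast hh.ne')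
  have hfne : (m.factorial : ℂ) ≠ 0 := by exact_mod_cast m.factorial_ne_zero
  rcases eq_or_ne j m with rfl | hne
  · rw [if_pos rfl, if_pos rfl]
    field_simp
    ring_nf
    rw [pow_mul', neg_one_sq, one_pow, mul_one]
  · rw [if_neg hne, if_neg hne, mul_zero]

lemma norm_w_le (t : ℂ) (m h i : ℕ) (hh : 0 < h) (hi : i ≤ m) :
    ‖w t m h i‖ ≤ ‖t‖ * 2^m / ((h:ℝ)^m) := by
  have h1 : ‖w t m h i‖ = ‖t‖ * (m.choose i : ℝ) / ((h:ℝ)^m * (m.factorial : ℝ)) := by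
    rw [w]
    rw [norm_div, norm_mul, norm_mul]
    congr 1
    · congr 1
      · congr 1
        · simp
      · simp
    · rw [norm_mul]
      congr 1 <;> simp
  rw [h1]
  have hch : (m.choose i : ℝ) ≤ 2^m := by
    have : m.choose i ≤ 2^m := by
      rw [← Nat.sum_range_choose m]
      rcases Nat.lt_or_ge i (m+1) with hi' | hi'
      · exact Finset.single_le_sum (f := fun t => m.choose t) (fun t _ => Nat.zero_le _) (Finset.mem_range.mpr hi')
      · omega
    exact_mod_cast this
  have hfac : (1:ℝ) ≤ (m.factorial : ℝ) := by exact_mod_cast m.factorial_pos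
  have hhp : (0:ℝ) < (h:ℝ)^m := pow_pos (by exact_mod_cast hh) m
  rw [div_le_div_iff₀ (by positivity) (by positivity)]
  calc ‖t‖ * (m.choose i : ℝ) * ((h:ℝ)^m)
      ≤ ‖t‖ * 2^m * ((h:ℝ)^m * (m.factorial : ℝ)) := by
        rw [show ‖t‖ * 2^m * ((h:ℝ)^m * (m.factorial : ℝ)) = (‖t‖ * (2^m * (m.factorial : ℝ))) * (h:ℝ)^m by ring,
            show ‖t‖ * (m.choose i : ℝ) * ((h:ℝ)^m) = (‖t‖ * (m.choose i : ℝ)) * (h:ℝ)^m by ring]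
        apply mul_le_mul_of_nonneg_right _ hhp.le
        apply mul_le_mul_of_nonneg_left _ (norm_nonneg t)
        calc (m.choose i : ℝ) ≤ 2^m := hch
          _ ≤ 2^m * (m.factorial : ℝ) := le_mul_of_one_le_right (by positivity) hfac
    _ = ‖t‖ * 2^m * ((h:ℝ)^m * (m.factorial : ℝ)) := rfl

/-- spacing choice: large enough to kill lower moments -/
def Hc (t : ℂ) (m : ℕ) : ℕ := ⌈‖t‖ * 4^m * ((m:ℝ)+1)^m * 2^m⌉₊ + 1

lemma Hc_pos (t : ℂ) (m : ℕ) : 0 < Hc t m := Nat.succ_pos _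

lemma Hc_ge (t : ℂ) (m : ℕ) : ‖t‖ * 4^m * ((m:ℝ)+1)^m * 2^m ≤ (Hc t m : ℝ) := by
  have := Nat.le_ceil (‖t‖ * 4^m * ((m:ℝ)+1)^m * 2^m)
  have h2 : ((⌈‖t‖ * 4^m * ((m:ℝ)+1)^m * 2^m⌉₊ : ℝ)) ≤ ((Hc t m : ℝ)) := by
    rw [Hc]; push_cast; linarith
  linarith

/-- recursive construction of stage data (target, spacing) -/
noncomputable def stage (s : ℕ → ℂ) : ℕ → ℂ × ℕ
  | m =>
    let t : ℂ := s m - ∑ j ∈ (Finset.range m).attach, ∑ i ∈ Finset.range (j.1+1),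
        w (stage s j.1).1 j.1 (stage s j.1).2 i * ((((i+1)*(stage s j.1).2 : ℕ)) : ℂ)^m
    (t, Hc t m)
  termination_by m => m
  decreasing_by exact Finset.mem_range.mp j.2

/-- moment of order n of stage j -/
noncomputable def mom (s : ℕ → ℂ) (j n : ℕ) : ℂ :=
  ∑ i ∈ Finset.range (j+1),
    w (stage s j).1 j (stage s j).2 i * ((((i+1)*(stage s j).2 : ℕ)) : ℂ)^n

lemma stage_fst (s : ℕ → ℂ) (m : ℕ) :
    (stage s m).1 = s m - ∑ j ∈ Finset.range m, mom s j m := by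
  rw [stage]
  simp only [mom]
  rw [← Finset.sum_attach (Finset.range m)
    (fun j => ∑ i ∈ Finset.range (j+1),
      w (stage s j).1 j (stage s j).2 i * ((((i+1)*(stage s j).2 : ℕ)) : ℂ)^m)]

lemma stage_snd (s : ℕ → ℂ) (m : ℕ) :
    (stage s m).2 = Hc (stage s m).1 m := by
  conv_lhs => rw [stage]
  conv_rhs => rw [stage]

lemma stage_h_pos (s : ℕ → ℂ) (j : ℕ) : 0 < (stage s j).2 := by
  rw [stage_snd]; exact Hc_pos _ _

lemma mom_val (s : ℕ → ℂ) (j n : ℕ) (hn : n ≤ j) :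
    mom s j n = if n = j then (stage s j).1 else 0 := by
  rw [mom]
  exact mom_eq _ _ _ (stage_h_pos s j) _ hn

/-- weighted norm of stage j at order n -/
noncomputable def nmom (s : ℕ → ℂ) (j n : ℕ) : ℝ :=
  ∑ i ∈ Finset.range (j+1),
    ‖w (stage s j).1 j (stage s j).2 i‖ * ((((i+1)*(stage s j).2 : ℕ)) : ℝ)^n

lemma aux_real (a : ℝ) (ha : 0 ≤ a) (j n : ℕ) (h : ℝ) (hn : n + 1 ≤ j) (hh : 1 ≤ h)
    (hge : a*4^j*((j:ℝ)+1)^j*2^j ≤ h) :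
    ((j:ℝ)+1) * (a*2^j/h^j * (((j:ℝ)+1)*h)^n) ≤ (2⁻¹:ℝ)^j := by
  have hhp : (0:ℝ) < h := lt_of_lt_of_le one_pos hh
  have hj1 : (1:ℝ) ≤ (j:ℝ)+1 := by have := Nat.cast_nonneg (α := ℝ) j; linarith
  have step1 : ((j:ℝ)+1) * (a*2^j/h^j * (((j:ℝ)+1)*h)^n)
      = a*2^j*((j:ℝ)+1)^(n+1)*(h^n/h^j) := by
    rw [mul_pow, pow_succ]; ring
  have step2 : h^n/h^j ≤ 1/h := by
    rw [div_le_div_iff₀ (by positivity) hhp]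
    rw [← pow_succ, one_mul]
    exact pow_le_pow_right₀ hh hn
  have step3 : ((j:ℝ)+1)^(n+1) ≤ ((j:ℝ)+1)^j := pow_le_pow_right₀ hj1 hn
  have step4 : a*2^j*((j:ℝ)+1)^(n+1)*(h^n/h^j) ≤ a*2^j*((j:ℝ)+1)^j*(1/h) := by
    apply mul_le_mul
    · apply mul_le_mul_of_nonneg_left step3 (by positivity)
    · exact step2
    · positivity
    · positivity
  have step5 : a*2^j*((j:ℝ)+1)^j*(1/h) ≤ (2⁻¹:ℝ)^j := by
    rw [mul_one_div, div_le_iff₀ hhp]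
    calc a*2^j*((j:ℝ)+1)^j ≤ (2⁻¹:ℝ)^j * (a*4^j*((j:ℝ)+1)^j*2^j) := by
          rw [show (2⁻¹:ℝ)^j * (a*4^j*((j:ℝ)+1)^j*2^j) = a*(4^j*(2⁻¹^j*2^j))*((j:ℝ)+1)^j by ring,
              ← mul_pow, ← mul_pow]
          norm_num
          have h24 : (2:ℝ)^j ≤ 4^j := pow_le_pow_left₀ (by norm_num) (by norm_num) j
          have hx : (0:ℝ) ≤ ((j:ℝ)+1)^j := by positivity
          nlinarith [mul_le_mul_of_nonneg_left h24 ha]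
      _ ≤ (2⁻¹:ℝ)^j * h := by
          apply mul_le_mul_of_nonneg_left hge (by positivity)
  calc ((j:ℝ)+1) * (a*2^j/h^j * (((j:ℝ)+1)*h)^n) = a*2^j*((j:ℝ)+1)^(n+1)*(h^n/h^j) := step1
    _ ≤ a*2^j*((j:ℝ)+1)^j*(1/h) := step4
    _ ≤ (2⁻¹:ℝ)^j := step5

lemma nmom_le (s : ℕ → ℂ) (j n : ℕ) (hn : n < j) : nmom s j n ≤ (2⁻¹:ℝ)^j := by
  set t := (stage s j).1 with ht
  set h := (stage s j).2 with hhdef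
  have hh : 0 < h := stage_h_pos s j
  have hge : ‖t‖ * 4^j * ((j:ℝ)+1)^j * 2^j ≤ (h:ℝ) := by
    rw [hhdef, stage_snd]; exact Hc_ge _ _
  have hh1 : (1:ℝ) ≤ (h:ℝ) := by exact_mod_cast hh
  have hterm : ∀ i ∈ Finset.range (j+1),
      ‖w t j h i‖ * ((((i+1)*h : ℕ)) : ℝ)^n ≤ (‖t‖*2^j/(h:ℝ)^j) * (((j:ℝ)+1)*(h:ℝ))^n := by
    intro i hi
    have hi' : i ≤ j := by simp at hi; omega
    apply mul_le_mul (norm_w_le t j h i hh hi')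
    · apply pow_le_pow_left₀ (by positivity)
      push_cast
      have : (i:ℝ) + 1 ≤ (j:ℝ)+1 := by exact_mod_cast Nat.succ_le_succ hi'
      nlinarith [hh1]
    · positivity
    · positivity
  calc nmom s j n ≤ ∑ _i ∈ Finset.range (j+1), (‖t‖*2^j/(h:ℝ)^j) * (((j:ℝ)+1)*(h:ℝ))^n :=
        Finset.sum_le_sum hterm
    _ = ((j:ℝ)+1) * ((‖t‖*2^j/(h:ℝ)^j) * (((j:ℝ)+1)*(h:ℝ))^n) := by
        rw [Finset.sum_const, Finset.card_range]; push_cast; ring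
    _ ≤ (2⁻¹:ℝ)^j := aux_real ‖t‖ (norm_nonneg t) j n (h:ℝ) hn hh1 hge

/-- the stage-j atomic function -/
noncomputable def D (s : ℕ → ℂ) (j k : ℕ) : ℂ :=
  ∑ i ∈ Finset.range (j+1),
    if k = (i+1) * (stage s j).2 then w (stage s j).1 j (stage s j).2 i else 0

lemma node_inj (s : ℕ → ℂ) (j : ℕ) : ∀ x ∈ Finset.range (j+1), ∀ y ∈ Finset.range (j+1),
    (x+1) * (stage s j).2 = (y+1) * (stage s j).2 → x = y := by
  intro x _ y _ hxy
  have hp := stage_h_pos s j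
  have := Nat.eq_of_mul_eq_mul_right hp hxy
  omega

lemma D_apply_node (s : ℕ → ℂ) (j i : ℕ) (hi : i < j+1) :
    D s j ((i+1) * (stage s j).2) = w (stage s j).1 j (stage s j).2 i := by
  rw [D, Finset.sum_eq_single i]
  · rw [if_pos rfl]
  · intro i' hi' hne
    rw [if_neg]
    intro he
    exact hne (node_inj s j i' hi' i (Finset.mem_range.mpr hi) he.symm)
  · intro hc; exact absurd (Finset.mem_range.mpr hi) hc

lemma D_eq_zero (s : ℕ → ℂ) (j k : ℕ)
    (hk : k ∉ (Finset.range (j+1)).image (fun i => (i+1) * (stage s j).2)) :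
    D s j k = 0 := by
  rw [D]
  apply Finset.sum_eq_zero
  intro i hi
  rw [if_neg]
  intro he
  exact hk (Finset.mem_image.mpr ⟨i, hi, he.symm⟩)

lemma tsum_D_mul (s : ℕ → ℂ) (j : ℕ) (g : ℕ → ℂ) :
    ∑' k : ℕ, D s j k * g k
      = ∑ i ∈ Finset.range (j+1),
          w (stage s j).1 j (stage s j).2 i * g ((i+1) * (stage s j).2) := by
  rw [tsum_eq_sum (s := (Finset.range (j+1)).image (fun i => (i+1) * (stage s j).2))
    (fun b hb => by rw [D_eq_zero s j b hb, zero_mul])]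
  rw [Finset.sum_image (node_inj s j)]
  apply Finset.sum_congr rfl
  intro i hi
  rw [D_apply_node s j i (Finset.mem_range.mp hi)]

lemma tsum_normD (s : ℕ → ℂ) (j n : ℕ) :
    ∑' k : ℕ, ‖D s j k‖ * (k:ℝ)^n = nmom s j n := by
  rw [tsum_eq_sum (s := (Finset.range (j+1)).image (fun i => (i+1) * (stage s j).2))
    (fun b hb => by rw [D_eq_zero s j b hb, norm_zero, zero_mul])]
  rw [Finset.sum_image (node_inj s j)]
  apply Finset.sum_congr rfl
  intro i hi
  rw [D_apply_node s j i (Finset.mem_range.mp hi)]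

lemma summable_normD (s : ℕ → ℂ) (j n : ℕ) :
    Summable (fun k : ℕ => ‖D s j k‖ * (k:ℝ)^n) :=
  summable_of_ne_finset_zero
    (s := (Finset.range (j+1)).image (fun i => (i+1) * (stage s j).2))
    (fun b hb => by rw [D_eq_zero s j b hb, norm_zero, zero_mul])

lemma summable_nmom (s : ℕ → ℂ) (n : ℕ) : Summable (fun j => nmom s j n) := by
  have hg : Summable (fun j : ℕ => if j ≤ n then nmom s j n else (2⁻¹:ℝ)^j) := by
    rw [← summable_nat_add_iff (n+1)]
    have : (fun m : ℕ => if m + (n+1) ≤ n then nmom s (m + (n+1)) n else (2⁻¹:ℝ)^(m + (n+1)))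
        = fun m : ℕ => (2⁻¹:ℝ)^m * (2⁻¹:ℝ)^(n+1) := by
      funext m
      rw [if_neg (by omega), pow_add]
    rw [this]
    exact (summable_geometric_of_lt_one (by norm_num) (by norm_num)).mul_right _
  apply hg.of_nonneg_of_le
  · intro j
    apply Finset.sum_nonneg
    intro i _
    positivity
  · intro j
    rcases le_or_gt j n with hj | hj
    · rw [if_pos hj]
    · rw [if_neg (by omega)]
      exact nmom_le s j n hj

lemma F_summable (s : ℕ → ℂ) (n : ℕ) :
    Summable (fun p : ℕ × ℕ => ‖D s p.1 p.2‖ * (p.2 : ℝ)^n) := by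
  rw [summable_prod_of_nonneg (fun p => by positivity)]
  constructor
  · intro j; exact summable_normD s j n
  · have : (fun j => ∑' k : ℕ, ‖D s j k‖ * (k:ℝ)^n) = fun j => nmom s j n := by
      funext j; exact tsum_normD s j n
    rw [this]
    exact summable_nmom s n

/-- (Boas, atomic version) Every complex sequence is represented by an atomic
complex measure on the nonnegative integers with all absolute moments finite. -/
theorem stmt8 (s : ℕ → ℂ) :
    ∃ c : ℕ → ℂ,
      (∀ n : ℕ, Summable (fun k : ℕ => ‖c k‖ * (k : ℝ) ^ n)) ∧
      (∀ n : ℕ, s n = ∑' k : ℕ, c k * (k : ℂ) ^ n) := by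
  refine ⟨fun k => ∑' j : ℕ, D s j k, ?_, ?_⟩
  · -- summability of all absolute moments
    intro n
    have hcol : ∀ k : ℕ, Summable (fun j : ℕ => ‖D s j k‖) := by
      intro k
      have hinj : Function.Injective (fun j : ℕ => ((j, k) : ℕ × ℕ)) := by
        intro a b hab; exact (Prod.ext_iff.mp hab).1
      have := (F_summable s 0).comp_injective hinj
      simpa [Function.comp_def] using this
    have hmaj : Summable (fun k : ℕ => (∑' j : ℕ, ‖D s j k‖) * (k:ℝ)^n) := by
      have hswap : Summable ((fun p : ℕ × ℕ => ‖D s p.1 p.2‖ * (p.2 : ℝ)^n)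
          ∘ (Equiv.prodComm ℕ ℕ)) := (Equiv.summable_iff _).mpr (F_summable s n)
      have hswap' : Summable (fun p : ℕ × ℕ => ‖D s p.2 p.1‖ * (p.1 : ℝ)^n) := hswap
      have h2 := ((summable_prod_of_nonneg (fun p => by positivity)).mp hswap').2
      have : (fun k : ℕ => ∑' j : ℕ, ‖D s j k‖ * (k:ℝ)^n)
          = fun k : ℕ => (∑' j : ℕ, ‖D s j k‖) * (k:ℝ)^n := by
        funext k; exact tsum_mul_right
      rwa [this] at h2
    apply hmaj.of_nonneg_of_le
    · intro k; positivity
    · intro k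
      apply mul_le_mul_of_nonneg_right _ (by positivity)
      exact norm_tsum_le_tsum_norm (hcol k)
  · -- moment identities
    intro n
    have hG : Summable (fun p : ℕ × ℕ => D s p.1 p.2 * ((p.2 : ℂ))^n) := by
      apply Summable.of_norm
      have : (fun p : ℕ × ℕ => ‖D s p.1 p.2 * ((p.2:ℂ))^n‖)
          = fun p : ℕ × ℕ => ‖D s p.1 p.2‖ * ((p.2:ℝ))^n := by
        funext p; rw [norm_mul, norm_pow, Complex.norm_natCast]
      rw [this]; exact F_summable s n
    have step1 : ∑' k : ℕ, (∑' j : ℕ, D s j k) * (k:ℂ)^n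
        = ∑' k : ℕ, ∑' j : ℕ, D s j k * (k:ℂ)^n := by
      apply tsum_congr; intro k; exact tsum_mul_right.symm
    have step2 : ∑' k : ℕ, ∑' j : ℕ, D s j k * (k:ℂ)^n
        = ∑' j : ℕ, ∑' k : ℕ, D s j k * (k:ℂ)^n :=
      Summable.tsum_comm (f := fun j k => D s j k * (k:ℂ)^n) hG
    have step3 : ∀ j : ℕ, ∑' k : ℕ, D s j k * (k:ℂ)^n = mom s j n := by
      intro j
      rw [tsum_D_mul s j (fun k => (k:ℂ)^n), mom]
    have step4 : ∑' j : ℕ, mom s j n = ∑ j ∈ Finset.range (n+1), mom s j n := by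
      apply tsum_eq_sum
      intro j hj
      have hj' : n < j := by simpa using Nat.lt_of_succ_le (by simpa using hj)
      rw [mom_val s j n hj'.le, if_neg hj'.ne]
    have step5 : ∑ j ∈ Finset.range (n+1), mom s j n = s n := by
      rw [Finset.sum_range_succ, mom_val s n n le_rfl, if_pos rfl, stage_fst]
      ring
    rw [step1, step2]
    rw [tsum_congr step3, step4, step5]
end
end

section
/- (Duran via step functions) For every complex sequence (s_n)_{n∈ℕ} and every a ≥ 0 there exists a function f : ℝ → ℂ of the form f(x) = Σ_{k=0}^{∞} c_k · χ_{[a+k, a+k+1)}(x) with Σ_k |c_k|(a+k+1)ⁿ < ∞ for all n, such that s_n = ∫ xⁿ f(x) dx for all n ∈ ℕ. In particular supp f ⊆ [a, ∞). -/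
open Finset fwdDiff

private lemma fwdDiff_pow_eq (h : ℂ) : ∀ (m d : ℕ), d ≤ m → ∀ y : ℂ,
    Δ_[h] ^[m] (fun x : ℂ => x ^ d) y
      = if d = m then h ^ m * (m.factorial : ℂ) else 0 := by
  intro m
  induction m with
  | zero => intro d hd y; interval_cases d; simp
  | succ m IH =>
    intro d hd y
    have hΔ : Δ_[h] (fun x : ℂ => x ^ d)
        = fun x : ℂ => ∑ e ∈ range d, (d.choose e : ℂ) * h ^ (d - e) * x ^ e := by
      funext x
      have hb : (x + h) ^ d = ∑ e ∈ range (d + 1), x ^ e * h ^ (d - e) * (d.choose e : ℂ) :=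
        add_pow x h d
      rw [fwdDiff]
      rw [hb, Finset.sum_range_succ]
      simp only [Nat.choose_self, Nat.cast_one, Nat.sub_self, pow_zero, mul_one, one_mul]
      rw [add_sub_cancel_right]
      exact Finset.sum_congr rfl fun e he => by ring
    rw [Function.iterate_succ_apply, hΔ]
    have hsum : (fun x : ℂ => ∑ e ∈ range d, (d.choose e : ℂ) * h ^ (d - e) * x ^ e)
        = ∑ e ∈ range d, ((d.choose e : ℂ) * h ^ (d - e)) • (fun x : ℂ => x ^ e) := by
      funext x; simp [smul_eq_mul]
    rw [hsum, fwdDiff_iter_finset_sum]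
    simp only [fwdDiff_iter_const_smul]
    have : ∀ e ∈ range d, (((d.choose e : ℂ) * h ^ (d - e)) • Δ_[h] ^[m] (fun x : ℂ => x ^ e)) y
        = ((d.choose e : ℂ) * h ^ (d - e)) * (if e = m then h ^ m * (m.factorial : ℂ) else 0) := by
      intro e he
      rw [Finset.mem_range] at he
      have : e ≤ m := Nat.lt_succ_iff.mp (lt_of_lt_of_le he hd)
      simp [IH e this y, smul_eq_mul]
    rw [Finset.sum_apply]
    rw [Finset.sum_congr rfl this]
    by_cases hdm : d = m + 1
    · subst hdm
      simp only [mul_ite, mul_zero]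
      rw [Finset.sum_ite_eq' (range (m+1)) m]
      simp [Nat.choose_succ_self_right, Nat.factorial_succ]
      push_cast
      ring
    · have hd' : d ≤ m := Nat.lt_succ_iff.mp (lt_of_le_of_ne hd hdm)
      have : ∀ e ∈ range d, ((d.choose e : ℂ) * h ^ (d - e)) *
          (if e = m then h ^ m * (m.factorial : ℂ) else 0) = 0 := by
        intro e he
        rw [Finset.mem_range] at he
        have : e ≠ m := by omega
        simp [this]
      rw [Finset.sum_congr rfl this]
      simp [hdm]

private lemma fwdDiff_poly_eval (h y : ℂ) (m : ℕ) (P : Polynomial ℂ) (hP : P.natDegree ≤ m) :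
    Δ_[h] ^[m] (fun x : ℂ => P.eval x) y = h ^ m * (m.factorial : ℂ) * P.coeff m := by
  have hev : (fun x : ℂ => P.eval x)
      = ∑ d ∈ range (m+1), P.coeff d • (fun x : ℂ => x ^ d) := by
    funext x
    rw [Polynomial.eval_eq_sum_range' (Nat.lt_succ_of_le hP)]
    simp [smul_eq_mul]
  rw [hev, fwdDiff_iter_finset_sum]
  simp only [fwdDiff_iter_const_smul]
  rw [Finset.sum_apply]
  have : ∀ d ∈ range (m+1), (P.coeff d • Δ_[h] ^[m] fun x : ℂ => x ^ d) y
      = P.coeff d * (if d = m then h ^ m * (m.factorial : ℂ) else 0) := by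
    intro d hd
    rw [Finset.mem_range, Nat.lt_succ_iff] at hd
    simp [fwdDiff_pow_eq h m d hd y, smul_eq_mul]
  rw [Finset.sum_congr rfl this]
  simp only [mul_ite, mul_zero]
  rw [Finset.sum_ite_eq' (range (m+1)) m]
  simp [mul_comm]

private lemma block_sum_eval (H y : ℂ) (m : ℕ) (P : Polynomial ℂ) (hP : P.natDegree ≤ m) :
    ∑ j ∈ range (m+1), ((-1 : ℂ) ^ (m - j) * (m.choose j : ℂ)) * P.eval (y + j * H)
      = H ^ m * (m.factorial : ℂ) * P.coeff m := by
  have h1 := fwdDiff_iter_eq_sum_shift H (fun x : ℂ => P.eval x) m y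
  rw [fwdDiff_poly_eval H y m P hP] at h1
  rw [h1]
  apply Finset.sum_congr rfl
  intro j hj
  rw [zsmul_eq_mul, nsmul_eq_mul]
  push_cast
  ring

open Polynomial

/-- The moment value `∫ x^n` over `[a+k, a+k+1)`, as a complex number. -/
noncomputable def qv (a : ℝ) (n k : ℕ) : ℂ :=
  (((a + k + 1) ^ (n + 1) - (a + k) ^ (n + 1)) / (n + 1) : ℝ)

/-- Polynomial (in `k`) form of `qv`. -/
noncomputable def Pm (a : ℝ) (n : ℕ) : Polynomial ℂ :=
  C (((n : ℂ) + 1)⁻¹) * ((X + C ((a : ℂ) + 1)) ^ (n + 1) - (X + C (a : ℂ)) ^ (n + 1))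

lemma Pm_eval (a : ℝ) (n k : ℕ) : (Pm a n).eval (k : ℂ) = qv a n k := by
  have hn : ((n : ℂ) + 1) ≠ 0 := Nat.cast_add_one_ne_zero n
  simp only [Pm, qv, eval_mul, eval_C, eval_sub, eval_pow, eval_add, eval_X]
  push_cast
  rw [inv_mul_eq_div, div_eq_div_iff hn hn]
  ring

lemma Pm_coeff_aux (a : ℝ) (n i : ℕ) :
    (Pm a n).coeff i = ((n : ℂ) + 1)⁻¹ *
      ((((a:ℂ)+1) ^ (n + 1 - i) - (a:ℂ) ^ (n + 1 - i)) * ((n+1).choose i : ℂ)) := by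
  simp only [Pm, coeff_C_mul, coeff_sub, coeff_X_add_C_pow]
  ring

lemma Pm_coeff_self (a : ℝ) (n : ℕ) : (Pm a n).coeff n = 1 := by
  rw [Pm_coeff_aux]
  have h1 : n + 1 - n = 1 := by omega
  rw [h1, Nat.choose_succ_self_right]
  have hn : ((n : ℂ) + 1) ≠ 0 := Nat.cast_add_one_ne_zero n
  field_simp
  push_cast; ring

lemma Pm_natDegree_le (a : ℝ) (n : ℕ) : (Pm a n).natDegree ≤ n := by
  apply Polynomial.natDegree_le_iff_coeff_eq_zero.mpr
  intro i hi
  rw [Pm_coeff_aux]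
  rcases eq_or_lt_of_le (Nat.succ_le_of_lt hi) with h | h
  · have : n + 1 - i = 0 := by omega
    simp [this]
  · have : (n+1).choose i = 0 := Nat.choose_eq_zero_of_lt h
    simp [this]

lemma Pm_coeff_gt (a : ℝ) {n m : ℕ} (h : n < m) : (Pm a n).coeff m = 0 :=
  Polynomial.coeff_eq_zero_of_natDegree_lt (lt_of_le_of_lt (Pm_natDegree_le a n) h)

/-- `qv` is the integral of `x^n` over the interval. -/
lemma qv_integral (a : ℝ) (n k : ℕ) :
    ∫ x in Set.Ico (a + k) (a + k + 1), (x : ℂ) ^ n = qv a n k := by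
  rw [MeasureTheory.integral_Ico_eq_integral_Ioo, ← MeasureTheory.integral_Ioc_eq_integral_Ioo]
  rw [← intervalIntegral.integral_of_le (by linarith : a + k ≤ a + k + 1)]
  have : ∀ x : ℝ, (x : ℂ) ^ n = ((x ^ n : ℝ) : ℂ) := by intro x; push_cast; ring
  simp_rw [this]
  rw [intervalIntegral.integral_ofReal, integral_pow]
  rw [qv]

/-- bound: `0 ≤ qv ≤ (a+k+1)^n` (as a real). -/
lemma qv_norm_le (a : ℝ) (ha : 0 ≤ a) (n k : ℕ) : ‖qv a n k‖ ≤ (a + k + 1) ^ n := by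
  have h0 : (0:ℝ) ≤ a + k := by positivity
  have h1 : a + (k:ℝ) ≤ a + k + 1 := by linarith
  have key : (a + k + 1) ^ (n + 1) - (a + k) ^ (n + 1) ≤ (n + 1) * (a + k + 1) ^ n := by
    rw [← geom_sum₂_mul (a + k + 1) (a + k) (n + 1)]
    have : a + (k:ℝ) + 1 - (a + k) = 1 := by ring
    rw [this, mul_one]
    calc ∑ i ∈ range (n + 1), (a + k + 1) ^ i * (a + k) ^ (n + 1 - 1 - i)
        ≤ ∑ i ∈ range (n + 1), (a + k + 1) ^ n := by
          apply Finset.sum_le_sum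
          intro i hi
          rw [Finset.mem_range] at hi
          calc (a + k + 1) ^ i * (a + k) ^ (n + 1 - 1 - i)
              ≤ (a + k + 1) ^ i * (a + k + 1) ^ (n - i) := by
                apply mul_le_mul_of_nonneg_left (pow_le_pow_left₀ h0 h1 _) (by positivity)
            _ = (a + k + 1) ^ (i + (n - i)) := by rw [pow_add]
            _ = (a + k + 1) ^ n := by congr 1; omega
      _ = (n + 1) * (a + k + 1) ^ n := by
          rw [Finset.sum_const, Finset.card_range]; push_cast; ring
  have key2 : (0:ℝ) ≤ (a + k + 1) ^ (n + 1) - (a + k) ^ (n + 1) :=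
    sub_nonneg.mpr (pow_le_pow_left₀ h0 h1 _)
  rw [qv, Complex.norm_real, Real.norm_eq_abs, abs_div]
  rw [abs_of_nonneg key2, abs_of_pos (by positivity : (0:ℝ) < (n:ℝ)+1)]
  rw [div_le_iff₀ (by positivity : (0:ℝ) < (n:ℝ)+1)]
  calc (a + k + 1) ^ (n + 1) - (a + k) ^ (n + 1) ≤ (n + 1) * (a + k + 1) ^ n := key
    _ = (a + k + 1) ^ n * ((n:ℝ) + 1) := by ring


noncomputable def bmv (a : ℝ) (β : ℂ) (H m n : ℕ) : ℂ :=
  β * ∑ j ∈ range (m+1), ((-1:ℂ)^(m-j) * (m.choose j : ℂ)) * qv a n ((j+1)*H)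

noncomputable def DD (s : ℕ → ℂ) (a : ℝ) : ℕ → ℂ × ℕ
  | m =>
    let ρ : ℂ := s m - ∑ i ∈ (Finset.range m).attach,
        bmv a (DD s a i.1).1 (DD s a i.1).2 i.1 m
    let H : ℕ := max (max (m+1)
        (((Finset.range m).attach).sup fun i => (i.1+1) * (DD s a i.1).2 + 1))
        ⌈(4:ℝ)^m * (1+‖ρ‖) * ((a+2)*(m+1))^m⌉₊
    (ρ * (((H:ℂ))^m * (m.factorial:ℂ))⁻¹, H)
termination_by m => m
decreasing_by all_goals exact Finset.mem_range.mp i.2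

noncomputable def rr (s : ℕ → ℂ) (a : ℝ) (m : ℕ) : ℂ :=
  s m - ∑ i ∈ (Finset.range m).attach, bmv a (DD s a i.1).1 (DD s a i.1).2 i.1 m

noncomputable def hm (s : ℕ → ℂ) (a : ℝ) (m : ℕ) : ℕ :=
  max (max (m+1) (((Finset.range m).attach).sup fun i => (i.1+1) * (DD s a i.1).2 + 1))
    ⌈(4:ℝ)^m * (1+‖rr s a m‖) * ((a+2)*(m+1))^m⌉₊

lemma DD_def (s : ℕ → ℂ) (a : ℝ) (m : ℕ) :
    DD s a m = (rr s a m * (((hm s a m : ℂ))^m * (m.factorial:ℂ))⁻¹, hm s a m) := by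
  rw [DD, hm, rr]

noncomputable def hh (s : ℕ → ℂ) (a : ℝ) (m : ℕ) : ℕ := (DD s a m).2
noncomputable def bb (s : ℕ → ℂ) (a : ℝ) (m : ℕ) : ℂ := (DD s a m).1

lemma hh_eq (s : ℕ → ℂ) (a : ℝ) (m : ℕ) : hh s a m = hm s a m := by rw [hh, DD_def]
lemma bb_eq (s : ℕ → ℂ) (a : ℝ) (m : ℕ) :
    bb s a m = rr s a m * (((hh s a m : ℂ))^m * (m.factorial:ℂ))⁻¹ := by
  rw [bb, hh_eq, DD_def]

lemma rr_eq (s : ℕ → ℂ) (a : ℝ) (m : ℕ) :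
    rr s a m = s m - ∑ i ∈ Finset.range m, bmv a (bb s a i) (hh s a i) i m := by
  rw [rr, ← Finset.sum_attach (Finset.range m)
    (fun i => bmv a (bb s a i) (hh s a i) i m)]
  rfl

lemma hh_ge (s : ℕ → ℂ) (a : ℝ) (m : ℕ) : m + 1 ≤ hh s a m := by
  rw [hh_eq, hm]; exact le_trans (le_max_left _ _) (le_max_left _ _)

lemma hh_pos (s : ℕ → ℂ) (a : ℝ) (m : ℕ) : 0 < hh s a m :=
  lt_of_lt_of_le (Nat.succ_pos m) (hh_ge s a m)

lemma hh_gt (s : ℕ → ℂ) (a : ℝ) {i m : ℕ} (him : i < m) :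
    (i+1) * hh s a i + 1 ≤ hh s a m := by
  rw [hh_eq s a m, hm]
  refine le_trans ?_ (le_max_left _ _)
  refine le_trans ?_ (le_max_right _ _)
  have : (⟨i, Finset.mem_range.mpr him⟩ : {x // x ∈ Finset.range m}) ∈ (Finset.range m).attach :=
    Finset.mem_attach _ _
  exact Finset.le_sup (f := fun i => (i.1+1) * (DD s a i.1).2 + 1) this

lemma hh_bound (s : ℕ → ℂ) (a : ℝ) (m : ℕ) :
    (4:ℝ)^m * (1+‖rr s a m‖) * ((a+2)*(m+1))^m ≤ (hh s a m : ℝ) := by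
  rw [hh_eq s a m, hm]
  refine le_trans (Nat.le_ceil _) ?_
  exact_mod_cast Nat.cast_le.mpr (le_max_right _ _)
lemma bmv_eval (a : ℝ) (β : ℂ) (H : ℕ) {m n : ℕ} (hnm : n ≤ m) :
    bmv a β H m n = β * ((H:ℂ)^m * (m.factorial:ℂ) * (Pm a n).coeff m) := by
  rw [bmv]
  congr 1
  have hdeg : (Pm a n).natDegree ≤ m := le_trans (Pm_natDegree_le a n) hnm
  have hb := block_sum_eval (H:ℂ) (H:ℂ) m (Pm a n) hdeg
  rw [← hb]
  apply Finset.sum_congr rfl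
  intro j hj
  have hcast : ((H:ℂ) + (j:ℂ) * H) = (((j+1)*H : ℕ) : ℂ) := by push_cast; ring
  rw [hcast, Pm_eval]

lemma bmv_gt (a : ℝ) (β : ℂ) (H : ℕ) {m n : ℕ} (h : n < m) : bmv a β H m n = 0 := by
  rw [bmv_eval a β H (le_of_lt h), Pm_coeff_gt a h]
  ring

lemma bmv_self (a : ℝ) (β : ℂ) (H n : ℕ) :
    bmv a β H n n = β * ((H:ℂ)^n * (n.factorial:ℂ)) := by
  rw [bmv_eval a β H (le_refl n), Pm_coeff_self]
  ring

lemma moment_sum (s : ℕ → ℂ) (a : ℝ) (n : ℕ) :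
    ∑ i ∈ range (n+1), bmv a (bb s a i) (hh s a i) i n = s n := by
  rw [Finset.sum_range_succ, bmv_self, bb_eq]
  have hne : ((hh s a n : ℂ))^n * (n.factorial:ℂ) ≠ 0 := by
    apply mul_ne_zero
    · exact pow_ne_zero _ (Nat.cast_ne_zero.mpr (hh_pos s a n).ne')
    · exact_mod_cast Nat.factorial_ne_zero n
  rw [mul_assoc, inv_mul_cancel₀ hne, mul_one]
  rw [rr_eq]
  ring

noncomputable def Bf (s : ℕ → ℂ) (a : ℝ) (m k : ℕ) : ℂ :=
  bb s a m * ∑ j ∈ range (m+1),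
    (if k = (j+1) * hh s a m then ((-1:ℂ)^(m-j) * (m.choose j : ℂ)) else 0)

noncomputable def cc (s : ℕ → ℂ) (a : ℝ) (k : ℕ) : ℂ := ∑ m ∈ range (k+1), Bf s a m k

lemma Bf_eq_zero (s : ℕ → ℂ) (a : ℝ) {m k : ℕ} (hk : k < hh s a m) : Bf s a m k = 0 := by
  rw [Bf]
  have : ∀ j ∈ range (m+1),
      (if k = (j+1) * hh s a m then ((-1:ℂ)^(m-j) * (m.choose j : ℂ)) else 0) = 0 := by
    intro j hj
    have : k ≠ (j+1) * hh s a m := by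
      have : hh s a m ≤ (j+1) * hh s a m := Nat.le_mul_of_pos_left _ (Nat.succ_pos j)
      omega
    simp [this]
  rw [Finset.sum_congr rfl this]
  simp

lemma cc_eq (s : ℕ → ℂ) (a : ℝ) {k K : ℕ} (hK : k + 1 ≤ K) :
    cc s a k = ∑ m ∈ range K, Bf s a m k := by
  rw [cc]
  apply Finset.sum_subset (Finset.range_subset_range.mpr hK)
  intro m hm hm'
  rw [Finset.mem_range] at hm
  rw [Finset.mem_range, not_lt] at hm'
  apply Bf_eq_zero
  calc k < k + 1 := Nat.lt_succ_self k
    _ ≤ m + 1 := by omega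
    _ ≤ hh s a m := hh_ge s a m

lemma block_mul_sum (s : ℕ → ℂ) (a : ℝ) (g : ℕ → ℂ) {m K : ℕ}
    (hK : (m+1) * hh s a m < K) :
    ∑ k ∈ range K, Bf s a m k * g k
      = bb s a m * ∑ j ∈ range (m+1),
          ((-1:ℂ)^(m-j) * (m.choose j : ℂ)) * g ((j+1) * hh s a m) := by
  have step1 : ∀ k, Bf s a m k * g k
      = bb s a m * ∑ j ∈ range (m+1),
          (if k = (j+1) * hh s a m then ((-1:ℂ)^(m-j) * (m.choose j : ℂ)) * g k else 0) := by
    intro k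
    rw [Bf, mul_assoc, Finset.sum_mul, Finset.mul_sum, Finset.mul_sum]
    apply Finset.sum_congr rfl
    intro j hj
    rw [ite_mul, zero_mul, mul_ite, mul_zero]
  rw [Finset.sum_congr rfl (fun k _ => step1 k), ← Finset.mul_sum]
  congr 1
  rw [Finset.sum_comm]
  apply Finset.sum_congr rfl
  intro j hj
  rw [Finset.mem_range] at hj
  have hpt : (j+1) * hh s a m ∈ range K := by
    rw [Finset.mem_range]
    calc (j+1) * hh s a m ≤ (m+1) * hh s a m := Nat.mul_le_mul_right _ (by omega)
      _ < K := hK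
  rw [Finset.sum_ite_eq' (range K) ((j+1) * hh s a m)
    (fun k => ((-1:ℂ)^(m-j) * (m.choose j:ℂ)) * g k)]
  simp [hpt]
lemma bb_norm (s : ℕ → ℂ) (a : ℝ) (m : ℕ) :
    ‖bb s a m‖ = ‖rr s a m‖ / ((hh s a m : ℝ)^m * (m.factorial : ℝ)) := by
  rw [bb_eq, norm_mul, norm_inv, norm_mul, norm_pow, Complex.norm_natCast,
    Complex.norm_natCast, div_eq_mul_inv]

noncomputable def nv (s : ℕ → ℂ) (a : ℝ) (m n : ℕ) : ℝ :=
  ‖bb s a m‖ * 2^m * (a + ((m+1) * hh s a m : ℕ) + 1)^n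

lemma nv_nonneg (s : ℕ → ℂ) (a : ℝ) (ha : 0 ≤ a) (m n : ℕ) : 0 ≤ nv s a m n := by
  rw [nv]; positivity

lemma block_norm_sum (s : ℕ → ℂ) (a : ℝ) (ha : 0 ≤ a) (m n K : ℕ) :
    ∑ k ∈ range K, ‖Bf s a m k‖ * (a+k+1)^n ≤ nv s a m n := by
  have hwmax : ∀ j ∈ range (m+1), (a + ((j+1) * hh s a m : ℕ) + 1 : ℝ)^n
      ≤ (a + ((m+1) * hh s a m : ℕ) + 1)^n := by
    intro j hj
    rw [Finset.mem_range] at hj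
    apply pow_le_pow_left₀ (by positivity)
    have : (j+1) * hh s a m ≤ (m+1) * hh s a m := Nat.mul_le_mul_right _ (by omega)
    have := (Nat.cast_le (α := ℝ)).mpr this
    linarith
  have step1 : ∀ k, ‖Bf s a m k‖ * (a+k+1)^n
      ≤ ‖bb s a m‖ * ∑ j ∈ range (m+1),
          (if k = (j+1) * hh s a m then (m.choose j : ℝ) * (a+k+1)^n else 0) := by
    intro k
    rw [Bf, norm_mul]
    have h1 : ‖∑ j ∈ range (m+1),
        (if k = (j+1) * hh s a m then ((-1:ℂ)^(m-j) * (m.choose j : ℂ)) else 0)‖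
        ≤ ∑ j ∈ range (m+1), (if k = (j+1) * hh s a m then (m.choose j : ℝ) else 0) := by
      refine le_trans (norm_sum_le _ _) (Finset.sum_le_sum ?_)
      intro j hj
      by_cases hkj : k = (j+1) * hh s a m
      · simp [hkj, norm_mul]
      · simp [hkj]
    calc ‖bb s a m‖ * ‖∑ j ∈ range (m+1),
          (if k = (j+1) * hh s a m then ((-1:ℂ)^(m-j) * (m.choose j : ℂ)) else 0)‖ * (a+k+1)^n
        ≤ ‖bb s a m‖ * (∑ j ∈ range (m+1),
          (if k = (j+1) * hh s a m then (m.choose j : ℝ) else 0)) * (a+k+1)^n := by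
          apply mul_le_mul_of_nonneg_right _ (by positivity)
          exact mul_le_mul_of_nonneg_left h1 (norm_nonneg _)
      _ = ∑ j ∈ range (m+1), ‖bb s a m‖ *
          (if k = (j+1) * hh s a m then (m.choose j : ℝ) * (a+k+1)^n else 0) := by
          rw [mul_assoc, Finset.sum_mul, Finset.mul_sum]
          apply Finset.sum_congr rfl
          intro j hj
          simp only [ite_mul, zero_mul, mul_ite, mul_zero]
      _ = _ := by rw [← Finset.mul_sum]
  calc ∑ k ∈ range K, ‖Bf s a m k‖ * (a+k+1)^n
      ≤ ∑ k ∈ range K, ‖bb s a m‖ * ∑ j ∈ range (m+1),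
          (if k = (j+1) * hh s a m then (m.choose j : ℝ) * (a+k+1)^n else 0) :=
        Finset.sum_le_sum fun k _ => step1 k
    _ = ‖bb s a m‖ * ∑ j ∈ range (m+1), ∑ k ∈ range K,
          (if k = (j+1) * hh s a m then (m.choose j : ℝ) * (a+k+1)^n else 0) := by
        rw [← Finset.mul_sum, Finset.sum_comm]
    _ ≤ ‖bb s a m‖ * ∑ j ∈ range (m+1),
          (m.choose j : ℝ) * (a + ((m+1) * hh s a m : ℕ) + 1)^n := by
        apply mul_le_mul_of_nonneg_left _ (norm_nonneg _)
        apply Finset.sum_le_sum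
        intro j hj
        rw [Finset.sum_ite_eq' (range K) ((j+1) * hh s a m)
          (fun k => (m.choose j : ℝ) * (a+k+1)^n)]
        by_cases hpt : (j+1) * hh s a m ∈ range K
        · rw [if_pos hpt]
          exact mul_le_mul_of_nonneg_left (hwmax j hj) (by positivity)
        · rw [if_neg hpt]
          positivity
    _ = nv s a m n := by
        rw [← Finset.sum_mul, nv]
        have : ∑ j ∈ range (m+1), (m.choose j : ℝ) = 2^m := by
          rw [← Nat.cast_sum, Nat.sum_range_choose]
          push_cast; ring
        rw [this, mul_assoc]

lemma nv_le (s : ℕ → ℂ) (a : ℝ) (ha : 0 ≤ a) {m n : ℕ} (h : n < m) :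
    nv s a m n ≤ (1/2)^m := by
  set R := ‖rr s a m‖ with hR
  set H := (hh s a m : ℝ) with hH
  have hR0 : 0 ≤ R := norm_nonneg _
  have hH1 : (1:ℝ) ≤ H := by
    rw [hH]; exact_mod_cast hh_pos s a m
  have hH0 : (0:ℝ) < H := by linarith
  set B : ℝ := (a+2)*(m+1) with hB
  have hB1 : (1:ℝ) ≤ B := by
    rw [hB]
    have h1 : (1:ℝ) ≤ (m:ℝ)+1 := by push_cast; linarith [Nat.cast_nonneg (α := ℝ) m]
    nlinarith
  have hbound : (4:ℝ)^m * (1+R) * B^m ≤ H := hh_bound s a m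
  have hfac : (1:ℝ) ≤ (m.factorial : ℝ) := by exact_mod_cast Nat.one_le_iff_ne_zero.mpr m.factorial_ne_zero
  have hbb : ‖bb s a m‖ ≤ R / H^m := by
    rw [bb_norm]
    exact div_le_div_of_nonneg_left hR0 (by positivity)
      (le_mul_of_one_le_right (by positivity) hfac)
  have hmH1 : (1:ℝ) ≤ ((m:ℝ)+1) * H := by nlinarith [Nat.cast_nonneg (α := ℝ) m]
  have hw : (a + (((m+1) * hh s a m : ℕ) : ℝ) + 1) ≤ B * H := by
    push_cast
    rw [hB]
    nlinarith
  have hm1 : m - 1 + 1 = m := by omega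
  calc nv s a m n = ‖bb s a m‖ * 2^m * (a + (((m+1) * hh s a m : ℕ) : ℝ) + 1)^n := by rw [nv]
    _ ≤ (R/H^m) * 2^m * (B*H)^n := by
        gcongr
    _ = R * 2^m * (B^n * H^n) / H^m := by rw [mul_pow]; field_simp
    _ ≤ R * 2^m * (B^m * H^(m-1)) / H^m := by
        gcongr <;> first | exact hB1 | exact hH1 | omega
    _ = R * 2^m * B^m / H := by
        have hpow : H^m = H^(m-1) * H := by rw [← pow_succ, hm1]
        rw [hpow]
        have hHm : H^(m-1) ≠ 0 := by positivity
        field_simp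
    _ ≤ R * 2^m * B^m / (4^m * (1+R) * B^m) := by
        have hd : (0:ℝ) < 4^m * (1+R) * B^m := by positivity
        exact div_le_div_of_nonneg_left (by positivity) hd hbound
    _ = (R/(1+R)) * (2^m/4^m) := by
        have hBm : B^m ≠ 0 := by positivity
        have h1R : (1+R) ≠ 0 := by positivity
        field_simp
    _ ≤ 1 * (1/2)^m := by
        have h1 : R/(1+R) ≤ 1 := (div_le_one (by linarith)).mpr (by linarith)
        have h2 : (2:ℝ)^m/4^m = (1/2)^m := by
          rw [← div_pow]; norm_num
        rw [h2]
        exact mul_le_mul_of_nonneg_right h1 (by positivity)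
    _ = (1/2)^m := one_mul _
lemma summable_cc (s : ℕ → ℂ) (a : ℝ) (ha : 0 ≤ a) (n : ℕ) :
    Summable (fun k : ℕ => ‖cc s a k‖ * (a + k + 1) ^ n) := by
  have hnn : ∀ k : ℕ, (0:ℝ) ≤ ‖cc s a k‖ * (a + k + 1) ^ n := by
    intro k
    have : (0:ℝ) ≤ a + k + 1 := by positivity
    positivity
  apply summable_of_sum_range_le hnn (c := (∑ m ∈ range (n+1), nv s a m n) + 2)
  intro K
  have step1 : ∀ k ∈ range K, ‖cc s a k‖ * (a + k + 1) ^ n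
      ≤ ∑ m ∈ range K, ‖Bf s a m k‖ * (a + k + 1) ^ n := by
    intro k hk
    rw [Finset.mem_range] at hk
    rw [cc_eq s a (by omega : k + 1 ≤ K), ← Finset.sum_mul]
    apply mul_le_mul_of_nonneg_right (norm_sum_le _ _) (by positivity)
  calc ∑ k ∈ range K, ‖cc s a k‖ * (a + k + 1) ^ n
      ≤ ∑ k ∈ range K, ∑ m ∈ range K, ‖Bf s a m k‖ * (a + k + 1) ^ n :=
        Finset.sum_le_sum step1
    _ = ∑ m ∈ range K, ∑ k ∈ range K, ‖Bf s a m k‖ * (a + k + 1) ^ n := Finset.sum_comm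
    _ ≤ ∑ m ∈ range K, (if m < n + 1 then nv s a m n else (1/2)^m) := by
        apply Finset.sum_le_sum
        intro m hm
        by_cases hmn : m < n + 1
        · rw [if_pos hmn]; exact block_norm_sum s a ha m n K
        · rw [if_neg hmn]
          exact le_trans (block_norm_sum s a ha m n K) (nv_le s a ha (by omega))
    _ ≤ (∑ m ∈ range (n+1), nv s a m n) + 2 := by
        rw [Finset.sum_ite]
        apply add_le_add
        · apply Finset.sum_le_sum_of_subset_of_nonneg
          · intro m hm
            rw [Finset.mem_filter, Finset.mem_range] at hm
            rw [Finset.mem_range]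
            exact hm.2
          · intro m hm _
            exact nv_nonneg s a ha m n
        · calc ∑ m ∈ (range K).filter (fun m => ¬ m < n + 1), ((1:ℝ)/2)^m
              ≤ ∑ m ∈ range K, ((1:ℝ)/2)^m := by
                apply Finset.sum_le_sum_of_subset_of_nonneg (Finset.filter_subset _ _)
                intro m _ _
                positivity
            _ ≤ 2 := sum_geometric_two_le K
lemma block_qv_sum (s : ℕ → ℂ) (a : ℝ) {m n K : ℕ} (hK : (m+1) * hh s a m < K) :
    ∑ k ∈ range K, Bf s a m k * qv a n k = bmv a (bb s a m) (hh s a m) m n := by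
  rw [block_mul_sum s a (qv a n) hK, bmv]

lemma partial_eq (s : ℕ → ℂ) (a : ℝ) {n M : ℕ} (hM : n ≤ M) :
    ∑ k ∈ range ((M+1) * hh s a M + 1), cc s a k * qv a n k = s n := by
  set K := (M+1) * hh s a M + 1 with hKdef
  have hMK : M + 1 < K := by
    have h1 : M + 1 ≤ hh s a M := hh_ge s a M
    have : (M+1) * 1 ≤ (M+1) * hh s a M := Nat.mul_le_mul_left _ (hh_pos s a M)
    omega
  have h1 : ∀ k ∈ range K, cc s a k * qv a n k
      = ∑ m ∈ range K, Bf s a m k * qv a n k := by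
    intro k hk
    rw [Finset.mem_range] at hk
    rw [cc_eq s a (by omega : k + 1 ≤ K), Finset.sum_mul]
  rw [Finset.sum_congr rfl h1, Finset.sum_comm]
  have h2 : ∀ m ∈ range K, m ∉ range (n+1) →
      ∑ k ∈ range K, Bf s a m k * qv a n k = 0 := by
    intro m hm hm'
    rw [Finset.mem_range, not_lt] at hm'
    by_cases hmM : m ≤ M
    · rw [block_qv_sum s a ?_]
      · exact bmv_gt a _ _ (by omega)
      · -- (m+1) * hh s a m < K
        rcases eq_or_lt_of_le hmM with h | h
        · subst h; omega
        · have := hh_gt s a h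
          have h3 : (m+1) * hh s a m < hh s a M := by omega
          have h4 : hh s a M ≤ (M+1) * hh s a M := Nat.le_mul_of_pos_left _ (Nat.succ_pos M)
          omega
    · -- m > M : all Bf are zero in range K
      apply Finset.sum_eq_zero
      intro k hk
      rw [Finset.mem_range] at hk
      have := hh_gt s a (by omega : M < m)
      rw [Bf_eq_zero s a (by omega : k < hh s a m), zero_mul]
  rw [← Finset.sum_subset (Finset.range_subset_range.mpr (by omega : n + 1 ≤ K)) h2]
  have h3 : ∀ m ∈ range (n+1), ∑ k ∈ range K, Bf s a m k * qv a n k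
      = bmv a (bb s a m) (hh s a m) m n := by
    intro m hm
    rw [Finset.mem_range] at hm
    apply block_qv_sum
    rcases eq_or_lt_of_le (by omega : m ≤ M) with h | h
    · subst h; omega
    · have := hh_gt s a h
      have h4 : hh s a M ≤ (M+1) * hh s a M := Nat.le_mul_of_pos_left _ (Nat.succ_pos M)
      have h5 : (m+1) * hh s a m < hh s a M := by omega
      omega
  rw [Finset.sum_congr rfl h3, moment_sum]
lemma hasSum_moment (s : ℕ → ℂ) (a : ℝ) (ha : 0 ≤ a) (n : ℕ) :
    HasSum (fun k : ℕ => cc s a k * qv a n k) (s n) := by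
  have hsummable : Summable (fun k : ℕ => cc s a k * qv a n k) := by
    apply Summable.of_norm_bounded (summable_cc s a ha n)
    intro k
    rw [norm_mul]
    exact mul_le_mul_of_nonneg_left (qv_norm_le a ha n k) (norm_nonneg _)
  have h1 := hsummable.hasSum
  suffices h : (∑' k, cc s a k * qv a n k) = s n by rw [← h]; exact h1
  have h2 := h1.tendsto_sum_nat
  set L := fun M : ℕ => (M+1) * hh s a M + 1 with hL
  have hmono : Filter.Tendsto L Filter.atTop Filter.atTop := by
    apply Filter.tendsto_atTop_mono (f := fun M : ℕ => M) (fun M => ?_) Filter.tendsto_id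
    have h3 : M + 1 ≤ hh s a M := hh_ge s a M
    have h4 : (M+1) * 1 ≤ (M+1) * hh s a M := Nat.mul_le_mul_left _ (hh_pos s a M)
    simp only [hL]
    omega
  have h3 := h2.comp hmono
  have h4 : (fun M : ℕ => ∑ k ∈ range (L M), cc s a k * qv a n k)
      =ᶠ[Filter.atTop] (fun _ => s n) := by
    rw [Filter.eventuallyEq_iff_exists_mem]
    exact ⟨Set.Ici n, Filter.Ici_mem_atTop n, fun M hM => partial_eq s a hM⟩
  have h5 : Filter.Tendsto (fun M : ℕ => ∑ k ∈ range (L M), cc s a k * qv a n k)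
      Filter.atTop (nhds (s n)) := Filter.Tendsto.congr' h4.symm tendsto_const_nhds
  exact tendsto_nhds_unique h3 h5


open MeasureTheory


/-- (Duran via step functions) Every complex sequence is the moment sequence of
a step function `f = Σ_k c_k · χ_{[a+k, a+k+1)}` supported in `[a, ∞)`. -/
theorem stmt13 (s : ℕ → ℂ) (a : ℝ) (ha : 0 ≤ a) :
    ∃ c : ℕ → ℂ,
      (∀ n : ℕ, Summable (fun k : ℕ => ‖c k‖ * (a + k + 1) ^ n)) ∧
      ∀ f : ℝ → ℂ,
        (∀ x, f x = ∑' k : ℕ,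
          c k * Set.indicator (Set.Ico (a + k) (a + k + 1)) (fun _ => (1 : ℂ)) x) →
        Function.support f ⊆ Set.Ici a ∧
        (∀ n : ℕ, Integrable (fun x : ℝ => (x : ℂ) ^ n * f x)) ∧
        (∀ n : ℕ, s n = ∫ x : ℝ, (x : ℂ) ^ n * f x) := by
  refine ⟨cc s a, fun n => summable_cc s a ha n, ?_⟩
  intro f hf
  set ind : ℕ → ℝ → ℂ :=
    fun k => Set.indicator (Set.Ico (a + k) (a + k + 1)) (fun _ => (1 : ℂ)) with hind
  -- pointwise vanishing for large k
  have hvan : ∀ (x : ℝ) (k : ℕ), k ∉ Finset.range (⌊x⌋₊ + 1) → cc s a k * ind k x = 0 := by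
    intro x k hk
    rw [Finset.mem_range, not_lt] at hk
    have hxk : x < a + k := by
      have h1 : x < (⌊x⌋₊ + 1 : ℕ) := by
        rcases le_or_gt 0 x with h | h
        · exact_mod_cast Nat.lt_floor_add_one x
        · have : (0:ℝ) ≤ (⌊x⌋₊ + 1 : ℕ) := Nat.cast_nonneg _
          linarith
      have h2 : ((⌊x⌋₊ + 1 : ℕ) : ℝ) ≤ k := by exact_mod_cast hk
      linarith
    have : x ∉ Set.Ico (a + k) (a + k + 1) := by
      rw [Set.mem_Ico]; intro hmem; linarith [hmem.1]
    rw [hind]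
    simp only [Set.indicator_of_notMem this, mul_zero]
  have hps : ∀ x : ℝ, Summable (fun k : ℕ => cc s a k * ind k x) := fun x =>
    summable_of_ne_finset_zero (hvan x)
  have hfsum : ∀ x : ℝ, HasSum (fun k : ℕ => cc s a k * ind k x) (f x) := by
    intro x
    rw [hf x]
    exact (hps x).hasSum
  -- support
  have hsupp : Function.support f ⊆ Set.Ici a := by
    intro x hx
    by_contra hxa
    rw [Set.mem_Ici, not_le] at hxa
    apply hx
    rw [hf x]
    have : ∀ k : ℕ, cc s a k * ind k x = 0 := by
      intro k
      have : x ∉ Set.Ico (a + k) (a + k + 1) := by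
        rw [Set.mem_Ico]
        intro hmem
        have : (0:ℝ) ≤ k := Nat.cast_nonneg k
        linarith [hmem.1]
      rw [hind]
      simp only [Set.indicator_of_notMem this, mul_zero]
    rw [tsum_congr this, tsum_zero]
  -- measurability of f
  have hindmeas : ∀ k : ℕ, StronglyMeasurable (ind k) := by
    intro k
    rw [hind]
    exact (stronglyMeasurable_const.indicator measurableSet_Ico)
  have hfmeas : AEStronglyMeasurable f (volume : Measure ℝ) := by
    apply aestronglyMeasurable_of_tendsto_ae (u := Filter.atTop)
      (f := fun K x => ∑ k ∈ Finset.range K, cc s a k * ind k x)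
    · intro K
      exact (Finset.stronglyMeasurable_fun_sum _
        fun k _ => (hindmeas k).const_mul (cc s a k)).aestronglyMeasurable
    · exact Filter.Eventually.of_forall fun x => (hfsum x).tendsto_sum_nat
  -- summands multiplied by x^n
  set G : ℕ → ℕ → ℝ → ℂ := fun n k x => (x:ℂ)^n * (cc s a k * ind k x) with hG
  have hGmeas : ∀ n k, AEStronglyMeasurable (G n k) (volume : Measure ℝ) := by
    intro n k
    exact ((Complex.continuous_ofReal.pow n).stronglyMeasurable.mul
      ((hindmeas k).const_mul (cc s a k))).aestronglyMeasurable
  have hGbound : ∀ n k x, (‖G n k x‖₊ : ENNReal)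
      ≤ Set.indicator (Set.Ico (a+(k:ℝ)) (a+k+1))
          (fun _ => ENNReal.ofReal (‖cc s a k‖ * (a+k+1)^n)) x := by
    intro n k x
    by_cases hx : x ∈ Set.Ico (a+(k:ℝ)) (a+k+1)
    · rw [Set.indicator_of_mem hx]
      rw [← ENNReal.ofReal_coe_nnreal, coe_nnnorm]
      apply ENNReal.ofReal_le_ofReal
      rw [hG]
      simp only
      rw [hind]
      simp only [Set.indicator_of_mem hx]
      rw [mul_one, norm_mul, norm_pow, Complex.norm_real]
      rw [Set.mem_Ico] at hx
      have hx0 : (0:ℝ) ≤ x := by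
        have : (0:ℝ) ≤ a + k := by positivity
        linarith [hx.1]
      have : |x| ^ n ≤ (a+k+1)^n := by
        rw [abs_of_nonneg hx0]
        apply pow_le_pow_left₀ hx0
        linarith [hx.2]
      calc ‖x‖ ^ n * ‖cc s a k‖ ≤ (a+k+1)^n * ‖cc s a k‖ := by
            apply mul_le_mul_of_nonneg_right _ (norm_nonneg _)
            rw [Real.norm_eq_abs]
            exact this
        _ = ‖cc s a k‖ * (a+k+1)^n := by ring
    · rw [Set.indicator_of_notMem hx, hG]
      simp only
      rw [hind]
      simp only [Set.indicator_of_notMem hx, mul_zero, nnnorm_zero]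
      exact le_refl 0
  have hGlint : ∀ n k, ∫⁻ x, (‖G n k x‖₊ : ENNReal)
      ≤ ENNReal.ofReal (‖cc s a k‖ * (a+(k:ℝ)+1)^n) := by
    intro n k
    calc ∫⁻ x, (‖G n k x‖₊ : ENNReal)
        ≤ ∫⁻ x, Set.indicator (Set.Ico (a+(k:ℝ)) (a+k+1))
            (fun _ => ENNReal.ofReal (‖cc s a k‖ * (a+k+1)^n)) x :=
          lintegral_mono (hGbound n k)
      _ = ENNReal.ofReal (‖cc s a k‖ * (a+(k:ℝ)+1)^n) * volume (Set.Ico (a+(k:ℝ)) (a+k+1)) := by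
          rw [lintegral_indicator measurableSet_Ico, setLIntegral_const]
      _ = ENNReal.ofReal (‖cc s a k‖ * (a+(k:ℝ)+1)^n) := by
          rw [Real.volume_Ico]
          norm_num
  have hGtsum : ∀ n, (∑' k, ∫⁻ x, (‖G n k x‖₊ : ENNReal)) ≠ ⊤ := by
    intro n
    apply ne_top_of_le_ne_top (b := ENNReal.ofReal (∑' k, ‖cc s a k‖ * (a+(k:ℝ)+1)^n))
    · exact ENNReal.ofReal_ne_top
    · rw [ENNReal.ofReal_tsum_of_nonneg (fun k => by positivity) (summable_cc s a ha n)]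
      exact ENNReal.tsum_le_tsum (fun k => hGlint n k)
  have hpt : ∀ (n : ℕ) (x : ℝ), (x:ℂ)^n * f x = ∑' k, G n k x := by
    intro n x
    rw [hG]
    simp only
    exact ((hfsum x).mul_left ((x:ℂ)^n)).tsum_eq.symm
  have hGx_summable : ∀ n x, Summable (fun k => (‖G n k x‖₊ : NNReal)) := by
    intro n x
    apply summable_of_ne_finset_zero (s := Finset.range (⌊x⌋₊ + 1))
    intro k hk
    rw [hG]
    simp only
    rw [hvan x k hk, mul_zero, nnnorm_zero]
  refine ⟨hsupp, ?_, ?_⟩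
  · -- Integrable
    intro n
    constructor
    · exact ((Complex.continuous_ofReal.pow n).aestronglyMeasurable).mul hfmeas
    · show (∫⁻ x : ℝ, (‖((x:ℝ):ℂ)^n * f x‖₊ : ENNReal)) < ⊤
      calc ∫⁻ x : ℝ, (‖((x:ℝ):ℂ)^n * f x‖₊ : ENNReal)
          ≤ ∫⁻ x, ∑' k, (‖G n k x‖₊ : ENNReal) := by
            apply lintegral_mono
            intro x
            simp only []
            rw [hpt n x]
            calc ((‖∑' k, G n k x‖₊ : NNReal) : ENNReal)
                ≤ ((∑' k, ‖G n k x‖₊ : NNReal) : ENNReal) := by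
                  exact_mod_cast ENNReal.coe_le_coe.mpr (nnnorm_tsum_le (hGx_summable n x))
              _ = ∑' k, (‖G n k x‖₊ : ENNReal) := ENNReal.coe_tsum (hGx_summable n x)
        _ = ∑' k, ∫⁻ x, (‖G n k x‖₊ : ENNReal) :=
            lintegral_tsum (fun k => (hGmeas n k).enorm)
        _ < ⊤ := lt_top_iff_ne_top.mpr (hGtsum n)
  · -- integral value
    intro n
    have h1 : (fun x : ℝ => (x:ℂ)^n * f x) = fun x => ∑' k, G n k x := funext (hpt n)
    rw [h1, integral_tsum (fun k => hGmeas n k) (hGtsum n)]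
    have h2 : ∀ k, ∫ x : ℝ, G n k x = cc s a k * qv a n k := by
      intro k
      have h3 : G n k = fun x => cc s a k *
          Set.indicator (Set.Ico (a+(k:ℝ)) (a+k+1)) (fun x : ℝ => (x:ℂ)^n) x := by
        funext x
        rw [hG]
        simp only
        by_cases hx : x ∈ Set.Ico (a+(k:ℝ)) (a+k+1)
        · rw [hind]
          simp only [Set.indicator_of_mem hx]
          ring
        · rw [hind]
          simp only [Set.indicator_of_notMem hx, mul_zero]
      rw [h3, integral_const_mul, integral_indicator measurableSet_Ico, qv_integral]
    rw [tsum_congr h2, (hasSum_moment s a ha n).tsum_eq]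
end

section
/- For every complex sequence (s_n)_{n∈ℕ} and every a ≥ 0 there exists a measurable function f : ℝ → ℂ with supp f ⊆ [a, ∞), ∫ |xⁿ f(x)| dx < ∞, and s_n = ∫ xⁿ f(x) dx for all n ∈ ℕ. -/
open MeasureTheory Finset fwdDiff

namespace Stmt19Aux

/-- iterated forward difference of a monomial -/
lemma fd_pow (h : ℝ) : ∀ m : ℕ, ∀ i : ℕ, i ≤ m → ∀ y : ℝ,
    (fwdDiff h)^[m] (fun y : ℝ => y ^ i) y
      = if i = m then (m.factorial : ℝ) * h ^ m else 0 := by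
  intro m
  induction m with
  | zero =>
    intro i hi y
    interval_cases i
    simp
  | succ m IH =>
    intro i hi y
    have step : (fwdDiff h) (fun y : ℝ => y ^ i)
        = fun y : ℝ => ∑ j ∈ Finset.range i, ((i.choose j : ℝ) * h ^ (i - j)) * y ^ j := by
      funext z
      have hb : (z + h) ^ i = ∑ j ∈ Finset.range (i + 1), z ^ j * h ^ (i - j) * i.choose j :=
        add_pow z h i
      have : (fwdDiff h) (fun y : ℝ => y ^ i) z = (z + h) ^ i - z ^ i := rfl
      rw [this, hb, Finset.sum_range_succ]
      simp only [Nat.sub_self, pow_zero, mul_one, Nat.choose_self, Nat.cast_one]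
      ring_nf
    rw [Function.iterate_succ_apply, step]
    have : (fun y : ℝ => ∑ j ∈ Finset.range i, ((i.choose j : ℝ) * h ^ (i - j)) * y ^ j)
        = ∑ j ∈ Finset.range i, ((i.choose j : ℝ) * h ^ (i - j)) • (fun y : ℝ => y ^ j) := by
      funext z
      simp [Finset.sum_apply, smul_eq_mul, mul_assoc]
    rw [this, fwdDiff_iter_finset_sum]
    have hterm : ∀ j ∈ Finset.range i,
        (fwdDiff h)^[m] (((i.choose j : ℝ) * h ^ (i - j)) • (fun y : ℝ => y ^ j)) y
          = ((i.choose j : ℝ) * h ^ (i - j)) * (if j = m then (m.factorial : ℝ) * h ^ m else 0) := by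
      intro j hj
      rw [fwdDiff_iter_const_smul]
      have hjm : j ≤ m := by
        have := Finset.mem_range.mp hj
        omega
      simp [IH j hjm y, smul_eq_mul]
    rw [Finset.sum_apply, Finset.sum_congr rfl hterm]
    by_cases hcase : i = m + 1
    · subst hcase
      rw [Finset.sum_eq_single m]
      · simp [Nat.choose_succ_self_right, Nat.factorial_succ]
        push_cast
        ring
      · intro j hj hjm
        simp [hjm]
      · intro hm
        exact absurd (Finset.self_mem_range_succ m) hm
    · have him : i ≤ m := by omega
      rw [if_neg hcase]
      apply Finset.sum_eq_zero
      intro j hj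
      have : j ≠ m := by
        have := Finset.mem_range.mp hj
        omega
      simp [this]


/-- `P n c = ∫_c^{c+1} x^n dx` as an explicit polynomial expression. -/
noncomputable def P (n : ℕ) (c : ℝ) : ℝ := ((c + 1) ^ (n + 1) - c ^ (n + 1)) / (n + 1)

lemma P_eq_sum (n : ℕ) (c : ℝ) :
    P n c = ∑ i ∈ Finset.range (n + 1), (((n+1).choose i : ℝ) / (n + 1)) * c ^ i := by
  have hb : (c + 1) ^ (n + 1)
      = ∑ i ∈ Finset.range (n + 2), c ^ i * 1 ^ (n + 1 - i) * ((n+1).choose i : ℝ) :=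
    add_pow c 1 (n+1)
  rw [P, hb, Finset.sum_range_succ]
  simp only [one_pow, mul_one, Nat.choose_self, Nat.cast_one]
  rw [add_sub_cancel_right, Finset.sum_div]
  apply Finset.sum_congr rfl
  intro i _
  ring

lemma fd_P (h : ℝ) (n m : ℕ) (hnm : n ≤ m) (y : ℝ) :
    (fwdDiff h)^[m] (P n) y = if n = m then (m.factorial : ℝ) * h ^ m else 0 := by
  have hP : P n = ∑ i ∈ Finset.range (n + 1),
      (((n+1).choose i : ℝ) / (n + 1)) • (fun c : ℝ => c ^ i) := by
    funext c
    rw [P_eq_sum]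
    simp [Finset.sum_apply, smul_eq_mul]
  rw [hP, fwdDiff_iter_finset_sum, Finset.sum_apply]
  have hterm : ∀ i ∈ Finset.range (n + 1),
      (fwdDiff h)^[m] ((((n+1).choose i : ℝ) / (n + 1)) • (fun c : ℝ => c ^ i)) y
        = (((n+1).choose i : ℝ) / (n + 1)) *
            (if i = m then (m.factorial : ℝ) * h ^ m else 0) := by
    intro i hi
    have him : i ≤ m := by
      have := Finset.mem_range.mp hi; omega
    rw [fwdDiff_iter_const_smul, Pi.smul_apply, smul_eq_mul, fd_pow h m i him y]
  rw [Finset.sum_congr rfl hterm]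
  by_cases hc : n = m
  · subst hc
    rw [if_pos rfl, Finset.sum_eq_single n]
    · rw [if_pos rfl, Nat.choose_succ_self_right]
      field_simp
      simp
    · intro i hi hin
      simp [hin]
    · intro hn
      exact absurd (Finset.self_mem_range_succ n) hn
  · rw [if_neg hc]
    apply Finset.sum_eq_zero
    intro i hi
    have : i ≠ m := by
      have := Finset.mem_range.mp hi; omega
    simp [this]



/-- combination of interval indicators whose moments are triangular -/
noncomputable def bump (a h : ℝ) (m : ℕ) : ℝ → ℝ :=
  fun x => ∑ k ∈ Finset.range (m + 1),
    (-1 : ℝ) ^ (m - k) * (m.choose k) *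
      (Set.Icc (a + k * h) (a + k * h + 1)).indicator (fun _ => (1 : ℝ)) x

/-- explicit value of the `n`-th moment of `bump` -/
noncomputable def Mom (a h : ℝ) (m n : ℕ) : ℝ :=
  ∑ k ∈ Finset.range (m + 1), (-1 : ℝ) ^ (m - k) * (m.choose k) * P n (a + k * h)

lemma measurable_bump (a h : ℝ) (m : ℕ) : Measurable (bump a h m) := by
  apply Finset.measurable_sum
  intro k _
  exact (measurable_const.indicator measurableSet_Icc).const_mul _

lemma bump_abs_le (a h : ℝ) (m : ℕ) (x : ℝ) : |bump a h m x| ≤ 2 ^ m := by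
  refine (Finset.abs_sum_le_sum_abs _ _).trans ?_
  have : ∀ k ∈ Finset.range (m + 1),
      |(-1 : ℝ) ^ (m - k) * (m.choose k) *
        (Set.Icc (a + k * h) (a + k * h + 1)).indicator (fun _ => (1 : ℝ)) x|
        ≤ (m.choose k : ℝ) := by
    intro k _
    rw [abs_mul, abs_mul, abs_pow, abs_neg, abs_one, one_pow, one_mul, Nat.abs_cast]
    by_cases hx : x ∈ Set.Icc (a + k * h) (a + k * h + 1)
    · simp [hx]
    · simp [hx]
  refine (Finset.sum_le_sum this).trans ?_
  rw [← Nat.cast_sum, Nat.sum_range_choose]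
  norm_num

lemma bump_eq_zero (a h : ℝ) (hh : 0 ≤ h) (m : ℕ) {x : ℝ} (hx : x < a) :
    bump a h m x = 0 := by
  apply Finset.sum_eq_zero
  intro k _
  have : x ∉ Set.Icc (a + k * h) (a + k * h + 1) := by
    intro hmem
    have h1 : a + k * h ≤ x := hmem.1
    have h2 : (0:ℝ) ≤ k * h := mul_nonneg (Nat.cast_nonneg k) hh
    linarith
  simp [this]

lemma integrable_pow_bump (a h : ℝ) (m n : ℕ) :
    Integrable (fun x : ℝ => x ^ n * bump a h m x) := by
  have : (fun x : ℝ => x ^ n * bump a h m x)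
      = fun x => ∑ k ∈ Finset.range (m + 1),
        (-1 : ℝ) ^ (m - k) * (m.choose k) *
          (Set.Icc (a + k * h) (a + k * h + 1)).indicator (fun y => y ^ n) x := by
    funext x
    rw [bump, Finset.mul_sum]
    apply Finset.sum_congr rfl
    intro k _
    by_cases hx : x ∈ Set.Icc (a + k * h) (a + k * h + 1) <;> simp [hx] <;> ring
  rw [this]
  apply integrable_finset_sum
  intro k _
  refine Integrable.const_mul ?_ _
  rw [integrable_indicator_iff measurableSet_Icc]
  exact (continuous_pow n).continuousOn.integrableOn_compact isCompact_Icc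

lemma integral_indicator_pow (c : ℝ) (n : ℕ) :
    ∫ x : ℝ, (Set.Icc c (c + 1)).indicator (fun y => y ^ n) x = P n c := by
  rw [integral_indicator measurableSet_Icc, integral_Icc_eq_integral_Ioc,
    ← intervalIntegral.integral_of_le (by linarith : c ≤ c + 1), integral_pow]
  rfl

lemma integral_pow_bump (a h : ℝ) (m n : ℕ) :
    ∫ x : ℝ, x ^ n * bump a h m x = Mom a h m n := by
  have heq : (fun x : ℝ => x ^ n * bump a h m x)
      = fun x => ∑ k ∈ Finset.range (m + 1),
        (-1 : ℝ) ^ (m - k) * (m.choose k) *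
          (Set.Icc (a + k * h) (a + k * h + 1)).indicator (fun y => y ^ n) x := by
    funext x
    rw [bump, Finset.mul_sum]
    apply Finset.sum_congr rfl
    intro k _
    by_cases hx : x ∈ Set.Icc (a + k * h) (a + k * h + 1) <;> simp [hx] <;> ring
  rw [heq, integral_finset_sum]
  · apply Finset.sum_congr rfl
    intro k _
    rw [integral_const_mul, integral_indicator_pow]
  · intro k _
    refine Integrable.const_mul ?_ _
    rw [integrable_indicator_iff measurableSet_Icc]
    exact (continuous_pow n).continuousOn.integrableOn_compact isCompact_Icc

lemma Mom_eq_fd (a h : ℝ) (m n : ℕ) :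
    Mom a h m n = (fwdDiff h)^[m] (P n) a := by
  rw [fwdDiff_iter_eq_sum_shift]
  apply Finset.sum_congr rfl
  intro k _
  rw [zsmul_eq_mul]
  push_cast
  simp [nsmul_eq_mul]

lemma Mom_eq_zero (a h : ℝ) {m n : ℕ} (hnm : n < m) : Mom a h m n = 0 := by
  rw [Mom_eq_fd, fd_P h n m hnm.le, if_neg hnm.ne]

lemma Mom_diag (a h : ℝ) (m : ℕ) : Mom a h m m = (m.factorial : ℝ) * h ^ m := by
  rw [Mom_eq_fd, fd_P h m m le_rfl, if_pos rfl]


lemma integral_abs_pow_bump_le {a h : ℝ} (ha : 0 ≤ a) (hh : 0 ≤ h) (m n : ℕ) :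
    ∫ x : ℝ, |x ^ n * bump a h m x| ≤ 2 ^ m * (a + m * h + 1) ^ n := by
  set B : ℝ := (a + m * h + 1) ^ n with hB
  have hB0 : 0 ≤ B := by positivity
  have hptw : ∀ x : ℝ, |x ^ n * bump a h m x|
      ≤ ∑ k ∈ Finset.range (m + 1),
          (m.choose k : ℝ) * (Set.Icc (a + k * h) (a + k * h + 1)).indicator
            (fun _ => B) x := by
    intro x
    have heq : x ^ n * bump a h m x
        = ∑ k ∈ Finset.range (m + 1),
          (-1 : ℝ) ^ (m - k) * (m.choose k) *
            (Set.Icc (a + k * h) (a + k * h + 1)).indicator (fun y => y ^ n) x := by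
      rw [bump, Finset.mul_sum]
      apply Finset.sum_congr rfl
      intro k _
      by_cases hx : x ∈ Set.Icc (a + k * h) (a + k * h + 1) <;> simp [hx] <;> ring
    rw [heq]
    refine (Finset.abs_sum_le_sum_abs _ _).trans (Finset.sum_le_sum ?_)
    intro k hk
    have hk' : k ≤ m := by have := Finset.mem_range.mp hk; omega
    rw [abs_mul, abs_mul, abs_pow, abs_neg, abs_one, one_pow, one_mul, Nat.abs_cast]
    by_cases hx : x ∈ Set.Icc (a + k * h) (a + k * h + 1)
    · rw [Set.indicator_of_mem hx, Set.indicator_of_mem hx]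
      refine mul_le_mul_of_nonneg_left ?_ (Nat.cast_nonneg _)
      rw [abs_pow]
      refine pow_le_pow_left₀ (abs_nonneg _) ?_ n
      rw [abs_le]
      constructor
      · have h1 : a + k * h ≤ x := hx.1
        have h2 : (0:ℝ) ≤ k * h := mul_nonneg (Nat.cast_nonneg k) hh
        have h3 : (0:ℝ) ≤ m * h := mul_nonneg (Nat.cast_nonneg m) hh
        linarith
      · have h1 : x ≤ a + k * h + 1 := hx.2
        have h2 : (k : ℝ) * h ≤ m * h := by
          apply mul_le_mul_of_nonneg_right _ hh
          exact_mod_cast hk'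
        linarith
    · simp [hx]
  have hintRHS : Integrable (fun x : ℝ => ∑ k ∈ Finset.range (m + 1),
      (m.choose k : ℝ) * (Set.Icc (a + k * h) (a + k * h + 1)).indicator
        (fun _ => B) x) := by
    apply integrable_finset_sum
    intro k _
    refine Integrable.const_mul ?_ _
    rw [integrable_indicator_iff measurableSet_Icc]
    exact (integrableOn_const_iff).mpr (Or.inr measure_Icc_lt_top)
  have hint : Integrable (fun x : ℝ => |x ^ n * bump a h m x|) :=
    (integrable_pow_bump a h m n).abs
  refine (integral_mono hint hintRHS hptw).trans ?_
  rw [integral_finset_sum]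
  · have : ∀ k ∈ Finset.range (m + 1),
        ∫ x : ℝ, (m.choose k : ℝ) * (Set.Icc (a + k * h) (a + k * h + 1)).indicator
          (fun _ => B) x = (m.choose k : ℝ) * B := by
      intro k _
      rw [integral_const_mul, integral_indicator_const _ measurableSet_Icc]
      simp [Real.volume_Icc]
    rw [Finset.sum_congr rfl this, ← Finset.sum_mul, ← Nat.cast_sum, Nat.sum_range_choose]
    norm_num
  · intro k _
    refine Integrable.const_mul ?_ _
    rw [integrable_indicator_iff measurableSet_Icc]
    exact (integrableOn_const_iff).mpr (Or.inr measure_Icc_lt_top)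


/-- The recursively defined pair (coefficient, step width). -/
noncomputable def dat (s : ℕ → ℂ) (a : ℝ) : ℕ → ℂ × ℝ
  | m =>
    let N : ℂ := s m - ∑ j ∈ (Finset.range m).attach,
        (dat s a j.1).1 * ((Mom a (dat s a j.1).2 j.1 m : ℝ) : ℂ)
    let h : ℝ := (1 + ‖N‖) * 4 ^ m * ((a + 2) * (m + 1)) ^ m
    (N / ((m.factorial : ℂ) * (h : ℂ) ^ m), h)
  termination_by m => m
  decreasing_by exact Finset.mem_range.mp j.2

/-- numerator in the recursion -/
noncomputable def Nval (s : ℕ → ℂ) (a : ℝ) (m : ℕ) : ℂ :=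
  s m - ∑ j ∈ Finset.range m, (dat s a j).1 * ((Mom a (dat s a j).2 j m : ℝ) : ℂ)

lemma dat_eq (s : ℕ → ℂ) (a : ℝ) (m : ℕ) :
    dat s a m = (Nval s a m /
        ((m.factorial : ℂ) *
          (((1 + ‖Nval s a m‖) * 4 ^ m * ((a + 2) * (m + 1)) ^ m : ℝ) : ℂ) ^ m),
      (1 + ‖Nval s a m‖) * 4 ^ m * ((a + 2) * (m + 1)) ^ m) := by
  rw [dat]
  have : ∑ j ∈ (Finset.range m).attach,
        (dat s a j.1).1 * ((Mom a (dat s a j.1).2 j.1 m : ℝ) : ℂ)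
      = ∑ j ∈ Finset.range m, (dat s a j).1 * ((Mom a (dat s a j).2 j m : ℝ) : ℂ) :=
    Finset.sum_attach _ (fun j => (dat s a j).1 * ((Mom a (dat s a j).2 j m : ℝ) : ℂ))
  rw [this]
  rfl

lemma hfun_eq (s : ℕ → ℂ) (a : ℝ) (m : ℕ) :
    (dat s a m).2 = (1 + ‖Nval s a m‖) * 4 ^ m * ((a + 2) * (m + 1)) ^ m := by
  rw [dat_eq]

lemma cfun_eq (s : ℕ → ℂ) (a : ℝ) (m : ℕ) :
    (dat s a m).1 = Nval s a m / ((m.factorial : ℂ) * (((dat s a m).2 : ℝ) : ℂ) ^ m) := by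
  rw [dat_eq]


lemma h_ge_one (s : ℕ → ℂ) {a : ℝ} (ha : 0 ≤ a) (m : ℕ) : 1 ≤ (dat s a m).2 := by
  rw [hfun_eq]
  have h1 : (1:ℝ) ≤ 1 + ‖Nval s a m‖ := by
    have := norm_nonneg (Nval s a m); linarith
  have h2 : (1:ℝ) ≤ 4 ^ m := one_le_pow₀ (by norm_num)
  have hq : (1:ℝ) ≤ (a + 2) * (m + 1) := by nlinarith [Nat.cast_nonneg (α := ℝ) m]
  have h3 : (1:ℝ) ≤ ((a + 2) * (m + 1)) ^ m := one_le_pow₀ hq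
  calc (1:ℝ) = 1 * 1 * 1 := by norm_num
    _ ≤ (1 + ‖Nval s a m‖) * 4 ^ m * ((a + 2) * (m + 1)) ^ m := by
        gcongr <;> linarith

lemma h_pos (s : ℕ → ℂ) {a : ℝ} (ha : 0 ≤ a) (m : ℕ) : 0 < (dat s a m).2 :=
  lt_of_lt_of_le one_pos (h_ge_one s ha m)

lemma abs_c (s : ℕ → ℂ) {a : ℝ} (ha : 0 ≤ a) (m : ℕ) :
    ‖(dat s a m).1‖
      = ‖Nval s a m‖ / ((m.factorial : ℝ) * (dat s a m).2 ^ m) := by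
  rw [cfun_eq, norm_div, norm_mul, norm_pow, Complex.norm_natCast, Complex.norm_real, Real.norm_eq_abs,
    abs_of_pos (h_pos s ha m)]

lemma c_mul_eq (s : ℕ → ℂ) {a : ℝ} (ha : 0 ≤ a) (m : ℕ) :
    (dat s a m).1 * ((m.factorial : ℂ) * (((dat s a m).2 : ℝ) : ℂ) ^ m) = Nval s a m := by
  rw [cfun_eq s a m]
  apply div_mul_cancel₀
  apply mul_ne_zero
  · exact_mod_cast (Nat.cast_ne_zero (R := ℂ)).mpr m.factorial_ne_zero
  · apply pow_ne_zero
    exact_mod_cast Complex.ofReal_ne_zero.mpr (h_pos s ha m).ne'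

lemma key_decay (s : ℕ → ℂ) {a : ℝ} (ha : 0 ≤ a) {n m : ℕ} (hnm : n < m) :
    ‖(dat s a m).1‖ * (2 ^ m * (a + m * (dat s a m).2 + 1) ^ n)
      ≤ (1/2 : ℝ) ^ m := by
  set h : ℝ := (dat s a m).2 with hh
  set N : ℝ := ‖Nval s a m‖ with hN
  set q : ℝ := (a + 2) * (m + 1) with hq
  have hN0 : 0 ≤ N := norm_nonneg _
  have h1 : 1 ≤ h := h_ge_one s ha m
  have h0 : 0 < h := lt_of_lt_of_le one_pos h1
  have hq1 : (1:ℝ) ≤ q := by rw [hq]; nlinarith [Nat.cast_nonneg (α := ℝ) m]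
  have hdef : h = (1 + N) * 4 ^ m * q ^ m := hfun_eq s a m
  have hfac1 : (1:ℝ) ≤ (m.factorial : ℝ) := by exact_mod_cast m.factorial_pos
  have hX : (a + m * h + 1) ^ n ≤ h ^ n * q ^ n := by
    rw [← mul_pow]
    apply pow_le_pow_left₀ (by positivity)
    rw [hq]
    have hm0 : (0:ℝ) ≤ (m:ℝ) := Nat.cast_nonneg m
    nlinarith [mul_nonneg (mul_nonneg ha hm0) (le_of_lt h0), mul_nonneg ha (sub_nonneg.mpr h1),
      mul_nonneg hm0 (le_of_lt h0)]
  have hsplit : h ^ m = h ^ n * h ^ (m - n) := by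
    rw [← pow_add]; congr 1; omega
  have hgq : (1 + N) * 4 ^ m * q ^ n ≤ h := by
    rw [hdef]
    have : q ^ n ≤ q ^ m := pow_le_pow_right₀ hq1 hnm.le
    nlinarith [pow_pos (lt_of_lt_of_le one_pos hq1) n, pow_pos (show (0:ℝ) < 4 by norm_num) m]
  have hmn : h ≤ h ^ (m - n) := le_self_pow₀ h1 (by omega)
  rw [abs_c s ha m, ← hN, ← hh, div_mul_eq_mul_div, div_le_iff₀ (by positivity)]
  calc N * (2 ^ m * (a + m * h + 1) ^ n)
      ≤ N * (2 ^ m * (h ^ n * q ^ n)) := by gcongr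
    _ ≤ (1 + N) * (2 ^ m * (h ^ n * q ^ n)) := by
        have : (0:ℝ) ≤ 2 ^ m * (h ^ n * q ^ n) := by positivity
        nlinarith
    _ = (1 / 2 : ℝ) ^ m * (1 * (h ^ n * ((1 + N) * 4 ^ m * q ^ n))) := by
        have h4 : ((1:ℝ)/2) ^ m * 4 ^ m = 2 ^ m := by
          rw [← mul_pow]; norm_num
        rw [← h4]; ring
    _ ≤ (1 / 2 : ℝ) ^ m * ((m.factorial : ℝ) * (h ^ n * h ^ (m - n))) := by
        have h2 : h ^ n * ((1 + N) * 4 ^ m * q ^ n) ≤ h ^ n * h ^ (m - n) := by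
          apply mul_le_mul_of_nonneg_left (hgq.trans hmn) (by positivity)
        have h3 : (0:ℝ) ≤ h ^ n * ((1 + N) * 4 ^ m * q ^ n) := by positivity
        have h4 : (1:ℝ) * (h ^ n * ((1 + N) * 4 ^ m * q ^ n))
            ≤ (m.factorial : ℝ) * (h ^ n * h ^ (m - n)) := by
          calc (1:ℝ) * (h ^ n * ((1 + N) * 4 ^ m * q ^ n))
              = h ^ n * ((1 + N) * 4 ^ m * q ^ n) := one_mul _
            _ ≤ h ^ n * h ^ (m - n) := h2
            _ = 1 * (h ^ n * h ^ (m - n)) := (one_mul _).symm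
            _ ≤ (m.factorial : ℝ) * (h ^ n * h ^ (m - n)) := by
                apply mul_le_mul_of_nonneg_right hfac1 (by positivity)
        apply mul_le_mul_of_nonneg_left h4 (by positivity)
    _ = (1 / 2 : ℝ) ^ m * ((m.factorial : ℝ) * h ^ m) := by rw [hsplit]

lemma summable_bound (s : ℕ → ℂ) {a : ℝ} (ha : 0 ≤ a) (n : ℕ) :
    Summable (fun m : ℕ =>
      ‖(dat s a m).1‖ * (2 ^ m * (a + m * (dat s a m).2 + 1) ^ n)) := by
  rw [← summable_nat_add_iff (n + 1)]
  have hsum2 : Summable (fun m : ℕ => ((1:ℝ)/2) ^ (m + (n + 1))) := by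
    simp_rw [pow_add]
    exact summable_geometric_two.mul_right _
  refine Summable.of_nonneg_of_le (fun m => ?_) (fun m => ?_) hsum2
  · have hp := h_pos s ha (m + (n + 1))
    have : (0:ℝ) ≤ a + (m + (n + 1) : ℕ) * (dat s a (m + (n + 1))).2 + 1 := by
      have : (0:ℝ) ≤ ((m + (n + 1) : ℕ) : ℝ) * (dat s a (m + (n + 1))).2 :=
        mul_nonneg (Nat.cast_nonneg _) hp.le
      linarith
    have h2 : (0:ℝ) ≤ 2 ^ (m + (n + 1)) := by positivity
    exact mul_nonneg (norm_nonneg _) (mul_nonneg h2 (pow_nonneg this n))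
  · exact key_decay s ha (by omega)


variable (s : ℕ → ℂ) (a : ℝ)

/-- the `m`-th summand of the constructed function, multiplied by `x^n` -/
noncomputable def FF (n m : ℕ) (x : ℝ) : ℂ :=
  (x : ℂ) ^ n * ((dat s a m).1 * ((bump a (dat s a m).2 m x : ℝ) : ℂ))

lemma FF_eq (n m : ℕ) :
    FF s a n m = fun x => (dat s a m).1 * ((x ^ n * bump a (dat s a m).2 m x : ℝ) : ℂ) := by
  funext x
  rw [FF]
  push_cast
  ring

lemma FF_integrable (n m : ℕ) : Integrable (FF s a n m) := by
  rw [FF_eq]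
  exact (integrable_pow_bump a (dat s a m).2 m n).ofReal.const_mul _

lemma FF_measurable (n m : ℕ) : Measurable (FF s a n m) := by
  rw [FF_eq]
  exact (Complex.measurable_ofReal.comp
    ((measurable_id.pow_const n).mul (measurable_bump a (dat s a m).2 m))).const_mul _

lemma FF_norm (n m : ℕ) (x : ℝ) :
    ‖FF s a n m x‖ = ‖(dat s a m).1‖ * |x ^ n * bump a (dat s a m).2 m x| := by
  rw [FF_eq]
  simp only [norm_mul, Complex.norm_real, Real.norm_eq_abs, abs_mul]

lemma FF_integral_norm_le {a : ℝ} (ha : 0 ≤ a) (n m : ℕ) :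
    ∫ x : ℝ, ‖FF s a n m x‖
      ≤ ‖(dat s a m).1‖ * (2 ^ m * (a + m * (dat s a m).2 + 1) ^ n) := by
  have : (fun x : ℝ => ‖FF s a n m x‖)
      = fun x => ‖(dat s a m).1‖ * |x ^ n * bump a (dat s a m).2 m x| := by
    funext x; exact FF_norm s a n m x
  rw [this, integral_const_mul]
  exact mul_le_mul_of_nonneg_left
    (integral_abs_pow_bump_le ha (h_pos s ha m).le m n) (norm_nonneg _)

lemma FF_summable_integral_norm {a : ℝ} (ha : 0 ≤ a) (n : ℕ) :
    Summable (fun m : ℕ => ∫ x : ℝ, ‖FF s a n m x‖) := by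
  refine Summable.of_nonneg_of_le
    (fun m => integral_nonneg fun x => norm_nonneg _)
    (fun m => FF_integral_norm_le s ha n m) (summable_bound s ha n)

lemma summable_abs_c_two_pow {a : ℝ} (ha : 0 ≤ a) :
    Summable (fun m : ℕ => ‖(dat s a m).1‖ * 2 ^ m) := by
  have := summable_bound s ha 0
  simpa using this

lemma FF_ptw_summable_norm {a : ℝ} (ha : 0 ≤ a) (n : ℕ) (x : ℝ) :
    Summable (fun m : ℕ => ‖FF s a n m x‖) := by
  refine Summable.of_nonneg_of_le (fun m => norm_nonneg _) (fun m => ?_)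
    ((summable_abs_c_two_pow s ha).mul_left (|x| ^ n))
  rw [FF_norm, abs_mul, abs_pow]
  calc ‖(dat s a m).1‖ * (|x| ^ n * |bump a (dat s a m).2 m x|)
      ≤ ‖(dat s a m).1‖ * (|x| ^ n * 2 ^ m) := by
        refine mul_le_mul_of_nonneg_left ?_ (norm_nonneg _)
        exact mul_le_mul_of_nonneg_left (bump_abs_le a (dat s a m).2 m x) (by positivity)
    _ = |x| ^ n * (‖(dat s a m).1‖ * 2 ^ m) := by ring

lemma FF_ptw_summable {a : ℝ} (ha : 0 ≤ a) (n : ℕ) (x : ℝ) :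
    Summable (fun m : ℕ => FF s a n m x) :=
  (FF_ptw_summable_norm s ha n x).of_norm

lemma FF_tsum_measurable {a : ℝ} (ha : 0 ≤ a) (n : ℕ) :
    Measurable (fun x : ℝ => ∑' m : ℕ, FF s a n m x) := by
  apply measurable_of_tendsto_metrizable
    (f := fun N : ℕ => fun x : ℝ => ∑ m ∈ Finset.range N, FF s a n m x)
  · exact fun N => Finset.measurable_sum _ (fun m _ => FF_measurable s a n m)
  · rw [tendsto_pi_nhds]
    intro x
    exact (FF_ptw_summable s ha n x).hasSum.tendsto_sum_nat

lemma FF_tsum_integrable {a : ℝ} (ha : 0 ≤ a) (n : ℕ) :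
    Integrable (fun x : ℝ => ∑' m : ℕ, FF s a n m x) := by
  refine ⟨(FF_tsum_measurable s ha n).aestronglyMeasurable, ?_⟩
  have step1 : ∀ x : ℝ, (‖∑' m : ℕ, FF s a n m x‖₊ : ENNReal)
      ≤ ∑' m : ℕ, (‖FF s a n m x‖₊ : ENNReal) := by
    intro x
    have hs : Summable fun m : ℕ => ‖FF s a n m x‖₊ := by
      rw [← NNReal.summable_coe]
      exact FF_ptw_summable_norm s ha n x
    calc (‖∑' m : ℕ, FF s a n m x‖₊ : ENNReal)
        ≤ ((∑' m : ℕ, ‖FF s a n m x‖₊ : NNReal) : ENNReal) :=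
          ENNReal.coe_le_coe.2 (nnnorm_tsum_le hs)
      _ = ∑' m : ℕ, (‖FF s a n m x‖₊ : ENNReal) := ENNReal.coe_tsum hs
  have : ∫⁻ x : ℝ, ‖∑' m : ℕ, FF s a n m x‖₊ < ⊤ := by
    calc ∫⁻ x : ℝ, ‖∑' m : ℕ, FF s a n m x‖₊
        ≤ ∫⁻ x : ℝ, ∑' m : ℕ, (‖FF s a n m x‖₊ : ENNReal) := lintegral_mono step1
      _ = ∑' m : ℕ, ∫⁻ x : ℝ, ‖FF s a n m x‖₊ :=
          lintegral_tsum (fun m => ((FF_measurable s a n m).nnnorm.coe_nnreal_ennreal).aemeasurable)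
      _ = ∑' m : ℕ, ENNReal.ofReal (∫ x : ℝ, ‖FF s a n m x‖) := by
          congr 1
          funext m
          exact (ofReal_integral_norm_eq_lintegral_enorm (FF_integrable s a n m)).symm
      _ = ENNReal.ofReal (∑' m : ℕ, ∫ x : ℝ, ‖FF s a n m x‖) :=
          (ENNReal.ofReal_tsum_of_nonneg
            (fun m => integral_nonneg fun x => norm_nonneg _)
            (FF_summable_integral_norm s ha n)).symm
      _ < ⊤ := ENNReal.ofReal_lt_top
  exact this

lemma FF_integral (n m : ℕ) :
    ∫ x : ℝ, FF s a n m x = (dat s a m).1 * ((Mom a (dat s a m).2 m n : ℝ) : ℂ) := by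
  have h1 : ∫ x : ℝ, ((x ^ n * bump a (dat s a m).2 m x : ℝ) : ℂ)
      = ((∫ x : ℝ, x ^ n * bump a (dat s a m).2 m x : ℝ) : ℂ) := integral_ofReal
  rw [FF_eq, integral_const_mul, h1, integral_pow_bump]


lemma Nval_def (s : ℕ → ℂ) (a : ℝ) (m : ℕ) :
    Nval s a m
      = s m - ∑ j ∈ Finset.range m, (dat s a j).1 * ((Mom a (dat s a j).2 j m : ℝ) : ℂ) := rfl

end Stmt19Aux

open MeasureTheory Stmt19Aux

/-- Every complex sequence is the moment sequence of a measurable function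
supported in `[a, ∞)` (for any `a ≥ 0`) with all absolute moments finite. -/
theorem stmt19 (s : ℕ → ℂ) (a : ℝ) (ha : 0 ≤ a) :
    ∃ f : ℝ → ℂ, Measurable f ∧ Function.support f ⊆ Set.Ici a ∧
      (∀ n : ℕ, Integrable (fun x : ℝ => (x : ℂ) ^ n * f x)) ∧
      (∀ n : ℕ, s n = ∫ x : ℝ, (x : ℂ) ^ n * f x) := by
  have key_eq : ∀ n : ℕ, (fun x : ℝ => (x : ℂ) ^ n * ∑' m : ℕ, FF s a 0 m x)
      = fun x : ℝ => ∑' m : ℕ, FF s a n m x := by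
    intro n
    funext x
    rw [← tsum_mul_left]
    congr 1
    funext m
    rw [FF, FF, pow_zero, one_mul]
  refine ⟨fun x => ∑' m : ℕ, FF s a 0 m x, FF_tsum_measurable s ha 0, ?_, ?_, ?_⟩
  · intro x hx
    simp only [Function.mem_support] at hx
    by_contra hxa
    apply hx
    have hxa' : x < a := lt_of_not_ge hxa
    have hz : ∀ m : ℕ, FF s a 0 m x = 0 := by
      intro m
      rw [FF_eq]
      simp only []
      rw [bump_eq_zero a (dat s a m).2 (h_pos s ha m).le m hxa']
      simp
    simp only [hz]
    exact tsum_zero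
  · intro n
    show Integrable (fun x : ℝ => (x : ℂ) ^ n * ∑' m : ℕ, FF s a 0 m x)
    rw [key_eq n]
    exact FF_tsum_integrable s ha n
  · intro n
    show s n = ∫ x : ℝ, (x : ℂ) ^ n * ∑' m : ℕ, FF s a 0 m x
    rw [key_eq n,
      ← integral_tsum_of_summable_integral_norm (fun m => FF_integrable s a n m)
        (FF_summable_integral_norm s ha n),
      tsum_congr (FF_integral s a n),
      tsum_eq_sum (s := Finset.range (n + 1)) ?_]
    · rw [Finset.sum_range_succ]
      have hdiag : (dat s a n).1 * ((Mom a (dat s a n).2 n n : ℝ) : ℂ) = Nval s a n := by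
        rw [Mom_diag]
        rw [show (((n.factorial : ℝ) * (dat s a n).2 ^ n : ℝ) : ℂ)
            = (n.factorial : ℂ) * (((dat s a n).2 : ℝ) : ℂ) ^ n by push_cast; ring]
        exact c_mul_eq s ha n
      rw [hdiag, Nval_def]
      ring
    · intro m hm
      have hnm : n < m := by
        simp only [Finset.mem_range] at hm
        omega
      rw [Mom_eq_zero a (dat s a m).2 hnm]
      simp
end
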